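/- arXiv:1802.05558 — 8 statements merged into one kernel-verified Lean document; each statement's English description precedes it below -/
import Mathlib

section
/- Let a, b, c be nonnegative real numbers such that the generalized Choi map Φ_{[a,b,c]} is positive (i.e., 0 ≤ a < 2, a + b + c ≥ 2, and bc ≥ (1−a)² whenever a ≤ 1). Then Φ_{[a,b,c]} is indecomposable if and only if 4bc < (2−a)². -/
open Matrix
open scoped ComplexOrder

noncomputable section

/-- A map between complex matrix algebras is positive if it maps positive semidefinite
matrices to positive semidefinite matrices. -/
def IsPosMap {m n : ℕ} (Φ : Matrix (Fin m) (Fin m) ℂ → Matrix (Fin n) (Fin n) ℂ) : Prop :=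
  ∀ X, X.PosSemidef → (Φ X).PosSemidef

/-- Blockwise application of a map `Φ : M_m → M_n` to a matrix in `M_k(M_m)`:
`Φ_k (X_{ij}) = (Φ(X_{ij}))`. -/
def blockApply {m n : ℕ} (k : ℕ)
    (Φ : Matrix (Fin m) (Fin m) ℂ → Matrix (Fin n) (Fin n) ℂ)
    (X : Matrix (Fin k × Fin m) (Fin k × Fin m) ℂ) :
    Matrix (Fin k × Fin n) (Fin k × Fin n) ℂ :=
  Matrix.of fun p q => Φ (Matrix.of fun i j => X (p.1, i) (q.1, j)) p.2 q.2

/-- `Φ` is completely positive if it is `k`-positive for every `k`, i.e. the blockwise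
application of `Φ` to `M_k(M_m)` is a positive map for every `k`. -/
def IsCompletelyPositive {m n : ℕ}
    (Φ : Matrix (Fin m) (Fin m) ℂ → Matrix (Fin n) (Fin n) ℂ) : Prop :=
  ∀ k : ℕ, ∀ X : Matrix (Fin k × Fin m) (Fin k × Fin m) ℂ,
    X.PosSemidef → (blockApply k Φ X).PosSemidef

/-- `Φ` is decomposable if it is the sum of a completely positive linear map and a
completely copositive linear map. -/
def IsDecomposable {m n : ℕ}
    (Φ : Matrix (Fin m) (Fin m) ℂ → Matrix (Fin n) (Fin n) ℂ) : Prop :=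
  ∃ Φ₁ Φ₂ : Matrix (Fin m) (Fin m) ℂ → Matrix (Fin n) (Fin n) ℂ,
    IsLinearMap ℂ Φ₁ ∧ IsLinearMap ℂ Φ₂ ∧
    IsCompletelyPositive Φ₁ ∧ IsCompletelyPositive (fun X => (Φ₂ X)ᵀ) ∧
    ∀ X, Φ X = Φ₁ X + Φ₂ X

/-- The Choi matrix of `Φ`: `C_Φ = (Φ(E_{ij}))_{i,j}` as an element of `M_m ⊗ M_n`. -/
def choiMatrix {m n : ℕ} (Φ : Matrix (Fin m) (Fin m) ℂ → Matrix (Fin n) (Fin n) ℂ) :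
    Matrix (Fin m × Fin n) (Fin m × Fin n) ℂ :=
  Matrix.of fun p q => Φ (Matrix.single p.1 q.1 1) p.2 q.2

/-- The simple tensor `ξ ⊗ η` of two vectors. -/
def tensorVec {m n : ℕ} (ξ : Fin m → ℂ) (η : Fin n → ℂ) : Fin m × Fin n → ℂ :=
  fun p => ξ p.1 * η p.2

/-- The partial transposition `(id ⊗ transpose)` on `M_m ⊗ M_n`. -/
def partialTranspose {m n : ℕ} (ρ : Matrix (Fin m × Fin n) (Fin m × Fin n) ℂ) :
    Matrix (Fin m × Fin n) (Fin m × Fin n) ℂ :=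
  Matrix.of fun p q => ρ (p.1, q.2) (q.1, p.2)

/-- The Choi-like map `Φ_A` associated to a matrix `A` of coefficients: the `i`-th diagonal
entry of `Φ_A(X)` is `∑ k, A i k * x_{kk}` and the off-diagonal entries are `-x_{ij}`. -/
def PhiMap {n : ℕ} (A : Matrix (Fin n) (Fin n) ℝ) (X : Matrix (Fin n) (Fin n) ℂ) :
    Matrix (Fin n) (Fin n) ℂ :=
  Matrix.of fun i j => if i = j then ∑ k, (A i k : ℂ) * X k k else -X i j

/-- The generalized Choi map `Φ_{[a,b,c]}` of Cho, Kye and Lee. -/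
def genChoiMap (a b c : ℝ) : Matrix (Fin 3) (Fin 3) ℂ → Matrix (Fin 3) (Fin 3) ℂ :=
  PhiMap !![a, b, c; c, a, b; b, c, a]

/-- Kye's map `Φ_{[a; c₁, c₂, c₃]}`. -/
def kyeMap (a c₁ c₂ c₃ : ℝ) : Matrix (Fin 3) (Fin 3) ℂ → Matrix (Fin 3) (Fin 3) ℂ :=
  PhiMap !![a, 0, c₁; c₂, a, 0; 0, c₃, a]

/-- The diagonal map `Δ_A(X) = diag(∑_j (a_{ij} + δ_{ij}) x_{jj})_i`. -/
def DeltaMap {n : ℕ} (A : Matrix (Fin n) (Fin n) ℝ) (X : Matrix (Fin n) (Fin n) ℂ) :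
    Matrix (Fin n) (Fin n) ℂ :=
  Matrix.diagonal (fun i => ∑ j, ((A i j : ℂ) + if i = j then 1 else 0) * X j j)

/-- The map `Φ_A(X) = Δ_A(X) - X`. -/
def PhiDelta {n : ℕ} (A : Matrix (Fin n) (Fin n) ℝ) (X : Matrix (Fin n) (Fin n) ℂ) :
    Matrix (Fin n) (Fin n) ℂ :=
  DeltaMap A X - X


lemma psd_of_factor {n N : Type*} [Fintype n] [Fintype N] (M : Matrix n n ℂ)
    (B : Matrix N n ℂ) (h : M = Bᴴ * B) : M.PosSemidef := by
  rw [h]; exact posSemidef_conjTranspose_mul_self B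

lemma psd_diag_nonneg {n : Type*} [Fintype n] [DecidableEq n] {M : Matrix n n ℂ}
    (hM : M.PosSemidef) (i : n) : 0 ≤ M i i := by
  exact hM.diag_nonneg

lemma psd_trace_nonneg {n : Type*} [Fintype n] [DecidableEq n] {M : Matrix n n ℂ}
    (hM : M.PosSemidef) : 0 ≤ M.trace := by
  exact Finset.sum_nonneg fun i _ => psd_diag_nonneg hM i

lemma trace_mul_psd_nonneg {n : Type*} [Fintype n] [DecidableEq n]
    {A B : Matrix n n ℂ} (hA : A.PosSemidef) (hB : B.PosSemidef) :
    0 ≤ (A * B).trace := by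
  obtain ⟨C, rfl⟩ : ∃ C : Matrix n n ℂ, B = Cᴴ * C := by
    open MatrixOrder in exact CStarAlgebra.nonneg_iff_eq_star_mul_self.mp hB.nonneg
  have h1 : (A * (Cᴴ * C)).trace = (C * A * Cᴴ).trace := by
    rw [← Matrix.mul_assoc, Matrix.trace_mul_comm, Matrix.mul_assoc, ← Matrix.mul_assoc]
  rw [h1]
  exact psd_trace_nonneg (hA.mul_mul_conjTranspose_same C)

lemma trace_partialTranspose_mul {m n : ℕ}
    (A B : Matrix (Fin m × Fin n) (Fin m × Fin n) ℂ) :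
    (partialTranspose A * partialTranspose B).trace = (A * B).trace := by
  simp only [Matrix.trace, Matrix.diag, Matrix.mul_apply, partialTranspose, Matrix.of_apply]
  rw [← Finset.sum_product', ← Finset.sum_product']
  refine Finset.sum_nbij' (fun x => ((x.1.1, x.2.2), (x.2.1, x.1.2)))
    (fun x => ((x.1.1, x.2.2), (x.2.1, x.1.2))) ?_ ?_ ?_ ?_ ?_ <;> simp

lemma kraus_entry {m n k : ℕ} (V : Matrix (Fin n) (Fin m) ℂ)
    (X : Matrix (Fin k × Fin m) (Fin k × Fin m) ℂ) (p q : Fin k × Fin n) :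
    letI W : Matrix (Fin k × Fin n) (Fin k × Fin m) ℂ :=
      Matrix.of fun p q => if p.1 = q.1 then V p.2 q.2 else 0
    (W * X * Wᴴ) p q = ∑ i, ∑ j, V p.2 i * X (p.1, i) (q.1, j) * star (V q.2 j) := by
  simp only [Matrix.mul_apply, Matrix.conjTranspose_apply, Matrix.of_apply,
    Fintype.sum_prod_type, Finset.sum_mul, ite_mul, zero_mul, mul_ite, mul_zero,
    apply_ite star, star_zero]
  rw [Finset.sum_comm]
  simp only [Finset.sum_ite_irrel, Finset.sum_const_zero, Finset.sum_ite_eq,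
    Finset.mem_univ, if_true]
  rw [Finset.sum_comm]

lemma psd_sum {n : Type*} [Fintype n] {N : ℕ} (F : Fin N → Matrix n n ℂ)
    (h : ∀ r, (F r).PosSemidef) : (∑ r, F r).PosSemidef := by
  classical
  induction (Finset.univ : Finset (Fin N)) using Finset.induction_on with
  | empty => simpa using Matrix.PosSemidef.zero
  | insert _ _ hx ih => rw [Finset.sum_insert hx]; exact (h _).add ih

lemma kraus_cp {m n N : ℕ} (Φ : Matrix (Fin m) (Fin m) ℂ → Matrix (Fin n) (Fin n) ℂ)
    (V : Fin N → Matrix (Fin n) (Fin m) ℂ)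
    (h : ∀ B, Φ B = ∑ r, V r * B * (V r)ᴴ) : IsCompletelyPositive Φ := by
  intro k X hX
  set W : Fin N → Matrix (Fin k × Fin n) (Fin k × Fin m) ℂ := fun r =>
    Matrix.of fun p q => if p.1 = q.1 then V r p.2 q.2 else 0 with hW
  have key : blockApply k Φ X = ∑ r, W r * X * (W r)ᴴ := by
    ext p q
    simp only [blockApply, Matrix.of_apply, h, Finset.sum_apply, Matrix.sum_apply]
    refine Finset.sum_congr rfl fun r _ => ?_
    rw [kraus_entry (V r) X p q]
    simp only [Matrix.mul_apply, Finset.sum_mul, Matrix.conjTranspose_apply]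
    rw [Finset.sum_comm]
    simp
  rw [key]
  exact psd_sum _ fun r => hX.mul_mul_conjTranspose_same (W r)
lemma choi_eq_blockApply {m n : ℕ} (Φ : Matrix (Fin m) (Fin m) ℂ → Matrix (Fin n) (Fin n) ℂ) :
    choiMatrix Φ = blockApply m Φ (Matrix.of fun p q =>
      (if p.1 = p.2 then 1 else 0) * (if q.1 = q.2 then 1 else 0)) := by
  ext p q
  simp only [choiMatrix, blockApply, Matrix.of_apply]
  congr 2
  ext k l
  simp only [Matrix.of_apply, Matrix.single, Matrix.of_apply]
  by_cases h1 : p.1 = k <;> by_cases h2 : q.1 = l <;> simp [h1, h2, eq_comm]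

lemma Emat_psd (m : ℕ) : (Matrix.of fun (p q : Fin m × Fin m) =>
    ((if p.1 = p.2 then 1 else 0) * (if q.1 = q.2 then 1 else 0) : ℂ)).PosSemidef := by
  apply psd_of_factor _ (Matrix.of fun (_ : Fin 1) (q : Fin m × Fin m) =>
    (if q.1 = q.2 then 1 else 0 : ℂ))
  ext p q
  simp [Matrix.mul_apply, Matrix.conjTranspose_apply, apply_ite (starRingEnd ℂ)]

lemma cp_choi_psd {m n : ℕ} (Φ : Matrix (Fin m) (Fin m) ℂ → Matrix (Fin n) (Fin n) ℂ)
    (h : IsCompletelyPositive Φ) : (choiMatrix Φ).PosSemidef := by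
  rw [choi_eq_blockApply]
  exact h m _ (Emat_psd m)

lemma choi_transpose_eq_pt {m n : ℕ}
    (Φ : Matrix (Fin m) (Fin m) ℂ → Matrix (Fin n) (Fin n) ℂ) :
    choiMatrix (fun X => (Φ X)ᵀ) = partialTranspose (choiMatrix Φ) := by
  ext p q
  simp [choiMatrix, partialTranspose, Matrix.transpose_apply]

lemma pairing_nonneg {m n : ℕ} {Φ : Matrix (Fin m) (Fin m) ℂ → Matrix (Fin n) (Fin n) ℂ}
    (hd : IsDecomposable Φ) {ρ : Matrix (Fin m × Fin n) (Fin m × Fin n) ℂ}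
    (hρ : ρ.PosSemidef) (hρt : (partialTranspose ρ).PosSemidef) :
    0 ≤ (choiMatrix Φ * ρ).trace := by
  obtain ⟨Φ₁, Φ₂, _, _, h3, h4, h5⟩ := hd
  have hch : choiMatrix Φ = choiMatrix Φ₁ + choiMatrix Φ₂ := by
    ext p q; simp [choiMatrix, h5]
  rw [hch, Matrix.add_mul, Matrix.trace_add]
  have t1 : 0 ≤ (choiMatrix Φ₁ * ρ).trace :=
    trace_mul_psd_nonneg (cp_choi_psd _ h3) hρ
  have t2 : 0 ≤ (choiMatrix Φ₂ * ρ).trace := by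
    rw [← trace_partialTranspose_mul]
    rw [← choi_transpose_eq_pt]
    exact trace_mul_psd_nonneg (cp_choi_psd _ h4) hρt
  positivity
set_option maxHeartbeats 3000000 in
lemma witness_not_decomposable (a b c x y : ℝ) (hx : 0 ≤ x) (hy : 0 ≤ y) (hxy : x * y = 1)
    (hlt : a - 2 + c * x + b * y < 0) : ¬ IsDecomposable (genChoiMap a b c) := by
  intro hd
  set v : Fin 3 × Fin 3 → ℂ := fun p => if p.1 = p.2 then 1 else 0 with hv
  set D : Matrix (Fin 3) (Fin 3) ℝ := !![0,x,y; y,0,x; x,y,0] with hD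
  set ρ : Matrix (Fin 3 × Fin 3) (Fin 3 × Fin 3) ℂ :=
    (Matrix.of fun p q => v p * star (v q)) +
      Matrix.diagonal (fun p => (D p.1 p.2 : ℂ)) with hρdef
  have hρ : ρ.PosSemidef := by
    apply Matrix.PosSemidef.add
    · refine psd_of_factor _ (Matrix.of fun (_ : Fin 1) q => star (v q)) ?_
      ext p q
      simp [Matrix.mul_apply, Matrix.conjTranspose_apply]
    · rw [Matrix.posSemidef_diagonal_iff]
      intro p
      fin_cases p <;> simp [hD] <;> first | exact hx | exact hy
  set sx := Real.sqrt x with hsxdef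
  set sy := Real.sqrt y with hsydef
  have hsx : sx * sx = x := Real.mul_self_sqrt hx
  have hsy : sy * sy = y := Real.mul_self_sqrt hy
  have hsxy : sx * sy = 1 := by
    rw [hsxdef, hsydef, ← Real.sqrt_mul hx, hxy, Real.sqrt_one]
  set G : Fin 6 → Matrix (Fin 3) (Fin 3) ℝ :=
    ![!![1,0,0;0,0,0;0,0,0], !![0,0,0;0,1,0;0,0,0], !![0,0,0;0,0,0;0,0,1],
      !![0,sx,0; sy,0,0; 0,0,0], !![0,0,0; 0,0,sx; 0,sy,0], !![0,0,sy; 0,0,0; sx,0,0]] with hG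
  set B : Matrix (Fin 6) (Fin 3 × Fin 3) ℂ :=
    Matrix.of (fun r q => (G r q.1 q.2 : ℂ)) with hB
  have hPT : partialTranspose ρ = Bᴴ * B := by
    ext p q
    fin_cases p <;> fin_cases q <;>
      simp [partialTranspose, Matrix.mul_apply, Fin.sum_univ_succ, hB, hG, hv, hρdef, hD,
        Matrix.diagonal_apply, Matrix.cons_val_succ, ← Complex.ofReal_mul, hsx, hsy, hsxy,
        mul_comm sy sx, Matrix.vecHead, Matrix.vecTail]
  have hρt : (partialTranspose ρ).PosSemidef := psd_of_factor _ B hPT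
  have h0 : 0 ≤ (choiMatrix (genChoiMap a b c) * ρ).trace := pairing_nonneg hd hρ hρt
  have hval : (choiMatrix (genChoiMap a b c) * ρ).trace
      = ((3*a - 6 + 3*c*x + 3*b*y : ℝ) : ℂ) := by
    simp [Matrix.trace, Matrix.mul_apply, choiMatrix, genChoiMap, PhiMap,
      Fintype.sum_prod_type, Fin.sum_univ_succ, hρdef, hv, hD, Matrix.diagonal_apply,
      Matrix.single, Matrix.vecHead, Matrix.vecTail]
    push_cast
    ring
  rw [hval] at h0
  have hre : (0:ℝ) ≤ 3*a - 6 + 3*c*x + 3*b*y := Complex.zero_le_real.mp h0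
  linarith
lemma kraus_scaled_cp {N : ℕ} (Φ : Matrix (Fin 3) (Fin 3) ℂ → Matrix (Fin 3) (Fin 3) ℂ)
    (M : Fin N → Matrix (Fin 3) (Fin 3) ℂ) (t u : Fin N → ℝ)
    (ht : ∀ r, t r * t r = u r)
    (h : ∀ B, Φ B = ∑ r, ((u r : ℝ) : ℂ) • (M r * B * (M r)ᴴ)) :
    IsCompletelyPositive Φ := by
  apply kraus_cp Φ (fun r => ((t r : ℝ) : ℂ) • M r)
  intro B
  rw [h]
  refine Finset.sum_congr rfl fun r _ => ?_
  rw [Matrix.conjTranspose_smul]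
  rw [Matrix.smul_mul, Matrix.smul_mul, Matrix.mul_smul, smul_smul]
  congr 1
  rw [Complex.star_def, Complex.conj_ofReal, ← Complex.ofReal_mul, ht]

set_option maxHeartbeats 3000000 in
lemma decomposable_of_ge (a b c : ℝ) (ha : 0 ≤ a) (hb : 0 ≤ b) (hc : 0 ≤ c) (ha2 : a < 2)
    (h : (2 - a)^2 ≤ 4*(b*c)) : IsDecomposable (genChoiMap a b c) := by
  have hb0 : 0 < b := by nlinarith
  have hc0 : 0 < c := by nlinarith
  have hbC : (b:ℂ) ≠ 0 := Complex.ofReal_ne_zero.mpr hb0.ne'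
  have hcC : (c:ℂ) ≠ 0 := Complex.ofReal_ne_zero.mpr hc0.ne'
  set s : ℝ := (2 - a)/2 with hs
  have hs2 : s*s ≤ b*c := by rw [hs]; nlinarith
  refine ⟨fun X => Matrix.of fun i j => if i = j then (a:ℂ) * X i i else -((a/2 : ℝ):ℂ) * X i j,
          fun X => Matrix.of fun i j => if i = j then
            ∑ k, ((!![0,b,c;c,0,b;b,c,0] : Matrix (Fin 3) (Fin 3) ℝ) i k : ℂ) * X k k
            else -((s : ℝ):ℂ) * X i j, ?_, ?_, ?_, ?_, ?_⟩
  · constructor <;> intros U W <;> ext i j <;>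
      fin_cases i <;> fin_cases j <;>
        simp [Matrix.add_apply, Matrix.smul_apply, smul_eq_mul] <;> ring
  · constructor <;> intros U W <;> ext i j <;>
      fin_cases i <;> fin_cases j <;>
        simp [Matrix.add_apply, Matrix.smul_apply, smul_eq_mul, Fin.sum_univ_succ] <;> ring
  · -- CP of Φ₁
    apply kraus_scaled_cp _
      ![!![1,0,0;0,-1,0;0,0,0], !![1,0,0;0,0,0;0,0,-1], !![0,0,0;0,1,0;0,0,-1]]
      (fun _ => Real.sqrt (a/2)) (fun _ => a/2)
      (fun _ => Real.mul_self_sqrt (by linarith))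
    intro B
    ext i j
    fin_cases i <;> fin_cases j <;>
      simp [Matrix.mul_apply, Fin.sum_univ_succ, Matrix.smul_apply, smul_eq_mul,
        Matrix.vecMul, dotProduct, Matrix.conjTranspose_apply, Fintype.sum_prod_type, Matrix.vecHead, Matrix.vecTail] <;> push_cast <;> ring
  · -- ccp of Φ₂
    apply kraus_scaled_cp _
      ![!![0,(b:ℂ),0; -(s:ℝ),0,0; 0,0,0],
        !![0,0,0; 1,0,0; 0,0,0],
        !![0,0,(c:ℂ); 0,0,0; -(s:ℝ),0,0],
        !![0,0,0; 0,0,0; 1,0,0],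
        !![0,0,0; 0,0,(b:ℂ); 0,-(s:ℝ),0],
        !![0,0,0; 0,0,0; 0,1,0]]
      ![1/Real.sqrt b, Real.sqrt ((b*c-s*s)/b), 1/Real.sqrt c, Real.sqrt ((b*c-s*s)/c),
        1/Real.sqrt b, Real.sqrt ((b*c-s*s)/b)]
      ![b⁻¹, (b*c-s*s)/b, c⁻¹, (b*c-s*s)/c, b⁻¹, (b*c-s*s)/b]
      ?_ ?_
    · have e1 : (Real.sqrt b)⁻¹*(Real.sqrt b)⁻¹ = b⁻¹ := by
        rw [← mul_inv, Real.mul_self_sqrt hb]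
      have e2 : (Real.sqrt c)⁻¹*(Real.sqrt c)⁻¹ = c⁻¹ := by
        rw [← mul_inv, Real.mul_self_sqrt hc]
      have e3 : Real.sqrt ((b*c-s*s)/b) * Real.sqrt ((b*c-s*s)/b) = (b*c-s*s)/b :=
        Real.mul_self_sqrt (div_nonneg (by linarith) hb)
      have e4 : Real.sqrt ((b*c-s*s)/c) * Real.sqrt ((b*c-s*s)/c) = (b*c-s*s)/c :=
        Real.mul_self_sqrt (div_nonneg (by linarith) hc)
      intro r
      have h5 : (![(Real.sqrt b)⁻¹, Real.sqrt ((b*c-s*s)/b), (Real.sqrt c)⁻¹,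
          Real.sqrt ((b*c-s*s)/c), (Real.sqrt b)⁻¹, Real.sqrt ((b*c-s*s)/b)] : Fin 6 → ℝ) 5
          = Real.sqrt ((b*c-s*s)/b) := rfl
      have h5' : (![b⁻¹, (b*c-s*s)/b, c⁻¹, (b*c-s*s)/c, b⁻¹, (b*c-s*s)/b] : Fin 6 → ℝ) 5
          = (b*c-s*s)/b := rfl
      fin_cases r <;>
        simp [Matrix.cons_val_succ, h5, h5', e1, e2, e3, e4]
    · intro B
      ext i j
      fin_cases i <;> fin_cases j <;>
        simp [Matrix.mul_apply, Fin.sum_univ_succ, Matrix.smul_apply, smul_eq_mul,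
          Matrix.vecMul, dotProduct, Matrix.conjTranspose_apply, Fintype.sum_prod_type, Matrix.transpose_apply, Matrix.vecHead, Matrix.vecTail] <;>
        push_cast <;> field_simp <;> ring
  · intro X
    ext i j
    fin_cases i <;> fin_cases j <;>
      simp [genChoiMap, PhiMap, Matrix.add_apply, Fin.sum_univ_succ,
        Matrix.vecHead, Matrix.vecTail] <;> (try simp only [hs]) <;> push_cast <;> ring
/-- If `Φ_{[a,b,c]}` is positive (i.e. `0 ≤ a < 2`, `a + b + c ≥ 2`, and
`bc ≥ (1-a)²` whenever `a ≤ 1`), then it is indecomposable iff `4bc < (2-a)²`. -/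
theorem genChoiMap_indecomposable_iff (a b c : ℝ) (ha : 0 ≤ a) (hb : 0 ≤ b) (hc : 0 ≤ c)
    (ha2 : a < 2) (habc : 2 ≤ a + b + c) (hbc : a ≤ 1 → (1 - a) ^ 2 ≤ b * c) :
    ¬ IsDecomposable (genChoiMap a b c) ↔ 4 * b * c < (2 - a) ^ 2 := by
  constructor
  · intro hnd
    by_contra hge
    push_neg at hge
    exact hnd (decomposable_of_ge a b c ha hb hc ha2 (by nlinarith))
  · intro hlt
    by_cases hc0 : c = 0
    · have h2a : 0 < 2 - a := by linarith
      have hy0 : 0 < (2 - a)/(2*(b+1)) := div_pos h2a (by positivity)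
      refine witness_not_decomposable a b c (((2 - a)/(2*(b+1)))⁻¹) ((2 - a)/(2*(b+1)))
        (by positivity) hy0.le (inv_mul_cancel₀ hy0.ne') ?_
      rw [hc0]
      have : b * ((2 - a)/(2*(b+1))) < 2 - a := by
        rw [mul_div_assoc', div_lt_iff₀ (by positivity)]
        nlinarith
      nlinarith
    · have hc1 : 0 < c := lt_of_le_of_ne hc (Ne.symm hc0)
      have h2a : 0 < 2 - a := by linarith
      refine witness_not_decomposable a b c ((2 - a)/(2*c)) ((2*c)/(2 - a))
        (by positivity) (by positivity) (by field_simp) ?_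
      have e1 : c * ((2 - a)/(2*c)) = (2 - a)/2 := by field_simp
      have e2 : b * ((2*c)/(2 - a)) < (2 - a)/2 := by
        rw [mul_div_assoc', div_lt_div_iff₀ h2a (by norm_num : (0:ℝ) < 2)]
        nlinarith
      rw [e1]
      nlinarith
end
end

section
/- Let a, c_1, c_2, c_3 be nonnegative real numbers with 1 ≤ a < 2 and c_1c_2c_3 ≥ (2−a)³. Then the map Φ_{[a;c_1,c_2,c_3]} : M_3(ℂ) → M_3(ℂ) defined by Φ(X)_{11}=a·x_{11}+c_1·x_{33}, Φ(X)_{22}=c_2·x_{11}+a·x_{22}, Φ(X)_{33}=c_3·x_{22}+a·x_{33}, and Φ(X)_{ij}=−x_{ij} for i≠j, is indecomposable. -/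
open Matrix
open scoped ComplexOrder

noncomputable section

def outerM {ι : Type*} (v : ι → ℂ) : Matrix ι ι ℂ :=
  Matrix.of fun p q => v p * (starRingEnd ℂ) (v q)

lemma outerM_posSemidef {ι : Type*} [Fintype ι] [DecidableEq ι] (v : ι → ℂ) :
    (outerM v).PosSemidef := by
  refine Matrix.posSemidef_iff_dotProduct_mulVec.mpr ⟨?_, ?_⟩
  · ext i j
    simp [outerM, Matrix.conjTranspose_apply, mul_comm]
  · intro x
    have h : star x ⬝ᵥ (outerM v *ᵥ x)
        = (∑ p, (starRingEnd ℂ) (x p) * v p) * (∑ q, (starRingEnd ℂ) (v q) * x q) := by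
      rw [Finset.sum_mul_sum]
      simp only [dotProduct, mulVec, outerM, Matrix.of_apply, Finset.mul_sum,
        Pi.star_apply, RCLike.star_def]
      refine Finset.sum_congr rfl fun p _ => Finset.sum_congr rfl fun q _ => by ring
    have h2 : (∑ q, (starRingEnd ℂ) (v q) * x q)
        = (starRingEnd ℂ) (∑ p, (starRingEnd ℂ) (x p) * v p) := by
      rw [map_sum]; exact Finset.sum_congr rfl fun p _ => by simp [mul_comm]
    rw [h, h2, Complex.mul_conj]
    exact Complex.zero_le_real.mpr (Complex.normSq_nonneg _)

/-- the maximally entangled indicator vector -/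
def vDiag : Fin 3 × Fin 3 → ℂ := fun x => if x.1 = x.2 then 1 else 0

/-- scaled basis vector -/
def vE (i k : Fin 3) (c : ℝ) : Fin 3 × Fin 3 → ℂ := fun x => if x = (i, k) then (c : ℂ) else 0

/-- two-entry vector used for the partial transpose -/
def wP (i k : Fin 3) (c : ℝ) : Fin 3 × Fin 3 → ℂ :=
  fun x => if x = (i, k) then (c : ℂ) else if x = (k, i) then ((c⁻¹ : ℝ) : ℂ) else 0

def Qf (v : Fin 3 × Fin 3 → ℂ) (M : Matrix (Fin 3 × Fin 3) (Fin 3 × Fin 3) ℂ) : ℂ :=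
  star v ⬝ᵥ (M *ᵥ v)

def Lf (u : ℝ) (M : Matrix (Fin 3 × Fin 3) (Fin 3 × Fin 3) ℂ) : ℂ :=
  Qf vDiag M + Qf (vE 0 1 u) M + Qf (vE 1 2 u) M + Qf (vE 2 0 u) M
    + Qf (vE 1 0 u⁻¹) M + Qf (vE 2 1 u⁻¹) M + Qf (vE 0 2 u⁻¹) M

lemma Qf_nonneg {v M} (hM : M.PosSemidef) : 0 ≤ Qf v M := hM.dotProduct_mulVec_nonneg v

lemma Lf_nonneg {u M} (hM : M.PosSemidef) : 0 ≤ Lf u M := by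
  unfold Lf
  have h := fun v => Qf_nonneg (v := v) (M := M) hM
  exact add_nonneg (add_nonneg (add_nonneg (add_nonneg (add_nonneg (add_nonneg (h _) (h _)) (h _)) (h _)) (h _)) (h _)) (h _)

lemma Lf_add (u : ℝ) (M N : Matrix (Fin 3 × Fin 3) (Fin 3 × Fin 3) ℂ) :
    Lf u (M + N) = Lf u M + Lf u N := by
  simp only [Lf, Qf, Matrix.add_mulVec, dotProduct_add]
  ring
set_option maxHeartbeats 2000000 in
lemma Lf_pt (u : ℝ) (hu : u ≠ 0) (M : Matrix (Fin 3 × Fin 3) (Fin 3 × Fin 3) ℂ) :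
    Lf u M = Qf (wP 0 1 u) (partialTranspose M) + Qf (wP 1 2 u) (partialTranspose M)
      + Qf (wP 2 0 u) (partialTranspose M)
      + Qf (vE 0 0 1) (partialTranspose M) + Qf (vE 1 1 1) (partialTranspose M)
      + Qf (vE 2 2 1) (partialTranspose M) := by
  have hu' : (u : ℂ) ≠ 0 := by exact_mod_cast hu
  simp [Lf, Qf, vDiag, vE, wP, partialTranspose, dotProduct, mulVec,
    Fintype.sum_prod_type, Fin.sum_univ_three, Complex.conj_ofReal, Prod.mk.injEq]
  field_simp
  ring
set_option maxHeartbeats 2000000 in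
lemma Lf_choi_kye (u a c₁ c₂ c₃ : ℝ) :
    Lf u (choiMatrix (kyeMap a c₁ c₂ c₃))
      = ((3 * a - 6 + u ^ 2 * (c₁ + c₂ + c₃) : ℝ) : ℂ) := by
  simp [Lf, Qf, vDiag, vE, choiMatrix, kyeMap, PhiMap, Matrix.single,
    dotProduct, mulVec, Fintype.sum_prod_type, Fin.sum_univ_three,
    Complex.conj_ofReal, Prod.mk.injEq]
  ring
lemma blockApply_outer_vDiag (Φ : Matrix (Fin 3) (Fin 3) ℂ → Matrix (Fin 3) (Fin 3) ℂ) :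
    blockApply 3 Φ (outerM vDiag) = choiMatrix Φ := by
  ext p q
  show Φ (Matrix.of fun i j => outerM vDiag (p.1, i) (q.1, j)) p.2 q.2
      = Φ (Matrix.single p.1 q.1 1) p.2 q.2
  congr 1
  ext i j
  simp only [Matrix.of_apply, outerM, vDiag, Matrix.single]
  by_cases h1 : p.1 = i <;> by_cases h2 : q.1 = j <;>
    simp [h1, h2, eq_comm]

lemma choi_transpose (Φ : Matrix (Fin 3) (Fin 3) ℂ → Matrix (Fin 3) (Fin 3) ℂ) :
    choiMatrix (fun X => (Φ X)ᵀ) = partialTranspose (choiMatrix Φ) := by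
  ext p q
  rfl

/-- If `1 ≤ a < 2` and `c₁c₂c₃ ≥ (2-a)³`, then Kye's map
`Φ_{[a;c₁,c₂,c₃]}` is indecomposable. -/
theorem kyeMap_indecomposable (a c₁ c₂ c₃ : ℝ)
    (hc₁ : 0 ≤ c₁) (hc₂ : 0 ≤ c₂) (hc₃ : 0 ≤ c₃)
    (ha1 : 1 ≤ a) (ha2 : a < 2) (hc : (2 - a) ^ 3 ≤ c₁ * c₂ * c₃) :
    ¬ IsDecomposable (kyeMap a c₁ c₂ c₃) := by
  rintro ⟨Φ₁, Φ₂, -, -, hcp₁, hcp₂, hsum⟩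
  have h2a : (0:ℝ) < 2 - a := by linarith
  set s : ℝ := c₁ + c₂ + c₃ with hs
  have hs0 : 0 ≤ s := by positivity
  have hden : (0:ℝ) < 1 + s := by linarith
  set u : ℝ := Real.sqrt ((2 - a) / (1 + s)) with hu
  have hu2 : u ^ 2 = (2 - a) / (1 + s) := Real.sq_sqrt (by positivity)
  have hux : u ≠ 0 := by
    have : 0 < u := Real.sqrt_pos.mpr (by positivity)
    linarith
  have hC1 : (choiMatrix Φ₁).PosSemidef := by
    rw [← blockApply_outer_vDiag]
    exact hcp₁ 3 _ (outerM_posSemidef _)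
  have hC2 : (partialTranspose (choiMatrix Φ₂)).PosSemidef := by
    rw [← choi_transpose]
    rw [show choiMatrix (fun X => (Φ₂ X)ᵀ) = blockApply 3 (fun X => (Φ₂ X)ᵀ) (outerM vDiag)
      from (blockApply_outer_vDiag _).symm]
    exact hcp₂ 3 _ (outerM_posSemidef _)
  have hsplit : choiMatrix (kyeMap a c₁ c₂ c₃) = choiMatrix Φ₁ + choiMatrix Φ₂ := by
    ext p q
    simp [choiMatrix, hsum, Matrix.add_apply]
  have h1 : 0 ≤ Lf u (choiMatrix Φ₁) := Lf_nonneg hC1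
  have h2 : 0 ≤ Lf u (choiMatrix Φ₂) := by
    rw [Lf_pt u hux]
    have h := fun v => Qf_nonneg (v := v) hC2
    exact add_nonneg (add_nonneg (add_nonneg (add_nonneg (add_nonneg (h _) (h _)) (h _)) (h _)) (h _)) (h _)
  have h0 : 0 ≤ Lf u (choiMatrix (kyeMap a c₁ c₂ c₃)) := by
    rw [hsplit, Lf_add]
    exact add_nonneg h1 h2
  rw [Lf_choi_kye, Complex.zero_le_real] at h0
  have key : u ^ 2 * s < 3 * (2 - a) := by
    rw [hu2, div_mul_eq_mul_div, div_lt_iff₀ hden]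
    nlinarith
  rw [hs] at key
  linarith
end
end

section
/- A linear map Φ : M_m(ℂ) → M_n(ℂ) is positive if and only if its Choi matrix C_Φ is block positive, i.e., ⟨ξ⊗η, C_Φ (ξ⊗η)⟩ ≥ 0 for all vectors ξ ∈ ℂ^m and η ∈ ℂ^n. -/
open Matrix
open scoped ComplexOrder

noncomputable section

section AuxiliaryLemmas

private lemma dot_sum' {n : ℕ} {κ : Type*} [Fintype κ] (η : Fin n → ℂ)
    (f : κ → Matrix (Fin n) (Fin n) ℂ) :
    star η ⬝ᵥ (∑ k, f k).mulVec η = ∑ k, star η ⬝ᵥ (f k).mulVec η := by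
  rw [show (∑ k, f k).mulVec η = ∑ k, (f k).mulVec η from
    map_sum (Matrix.mulVec.addMonoidHomLeft η) _ _]
  simp only [dotProduct, Finset.sum_apply, Finset.mul_sum]
  exact Finset.sum_comm

private lemma dot_smul' {n : ℕ} (η : Fin n → ℂ) (S : Matrix (Fin n) (Fin n) ℂ) (c : ℂ) :
    star η ⬝ᵥ (c • S).mulVec η = c * (star η ⬝ᵥ S.mulVec η) := by
  simp [smul_mulVec, dotProduct_smul, smul_eq_mul]

private lemma hermitian_of_nonneg {n : ℕ} (A : Matrix (Fin n) (Fin n) ℂ)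
    (h : ∀ x : Fin n → ℂ, 0 ≤ star x ⬝ᵥ A.mulVec x) : A.IsHermitian := by
  have hre : ∀ x : Fin n → ℂ, (starRingEnd ℂ) (star x ⬝ᵥ A.mulVec x) = star x ⬝ᵥ A.mulVec x := by
    intro x
    have := h x
    rw [Complex.le_def] at this
    exact Complex.conj_eq_iff_im.mpr this.2.symm
  have expand : ∀ (c : ℂ) (i j : Fin n),
      star ((Pi.single i 1 : Fin n → ℂ) + c • (Pi.single j 1 : Fin n → ℂ)) ⬝ᵥ
        A.mulVec ((Pi.single i 1 : Fin n → ℂ) + c • (Pi.single j 1 : Fin n → ℂ))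
      = A i i + c * A i j + (starRingEnd ℂ) c * A j i + ((starRingEnd ℂ) c * c) * A j j := by
    intro c i j
    have hs : star ((Pi.single i 1 : Fin n → ℂ) + c • (Pi.single j 1 : Fin n → ℂ))
        = (Pi.single i 1 : Fin n → ℂ) + (starRingEnd ℂ) c • (Pi.single j 1 : Fin n → ℂ) := by
      funext p
      simp only [Pi.star_apply, Pi.add_apply, Pi.smul_apply, smul_eq_mul, star_add, star_mul',
        Pi.single_apply]
      split_ifs <;> simp
    rw [hs, mulVec_add, mulVec_smul, mulVec_single_one, mulVec_single_one]
    simp only [add_dotProduct, dotProduct_add, smul_dotProduct, dotProduct_smul,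
      single_dotProduct, smul_eq_mul, mul_one, Pi.add_apply, Pi.smul_apply, col_apply]
    ring
  have d : ∀ p : Fin n, (starRingEnd ℂ) (A p p) = A p p := by
    intro p
    have := hre ((Pi.single p 1 : Fin n → ℂ) + (0:ℂ) • (Pi.single p 1 : Fin n → ℂ))
    rw [expand 0 p p] at this
    simpa using this
  ext i j
  rw [conjTranspose_apply]
  have h1 := hre ((Pi.single j 1 : Fin n → ℂ) + (1:ℂ) • (Pi.single i 1 : Fin n → ℂ))
  have h2 := hre ((Pi.single j 1 : Fin n → ℂ) + Complex.I • (Pi.single i 1 : Fin n → ℂ))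
  rw [expand 1 j i] at h1
  rw [expand Complex.I j i] at h2
  have di := d i
  have dj := d j
  simp only [map_add, _root_.map_mul, _root_.map_one, Complex.conj_I, one_mul, mul_one, neg_mul,
    Complex.I_mul_I, neg_neg] at h1 h2
  rw [Complex.ext_iff] at h1 h2 di dj ⊢
  simp only [Complex.add_re, Complex.add_im, Complex.mul_re, Complex.mul_im, Complex.conj_re,
    Complex.conj_im, Complex.I_re, Complex.I_im, Complex.neg_re, Complex.neg_im,
    Complex.one_re, Complex.one_im, RCLike.star_def] at h1 h2 di dj ⊢
  constructor <;>
    · obtain ⟨h1a, h1b⟩ := h1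
      obtain ⟨h2a, h2b⟩ := h2
      obtain ⟨dia, dib⟩ := di
      obtain ⟨dja, djb⟩ := dj
      linarith

private lemma quadForm_eq {m n : ℕ} (Φ : Matrix (Fin m) (Fin m) ℂ → Matrix (Fin n) (Fin n) ℂ)
    (hlin : IsLinearMap ℂ Φ) (ξ : Fin m → ℂ) (η : Fin n → ℂ) :
    star (tensorVec ξ η) ⬝ᵥ (choiMatrix Φ).mulVec (tensorVec ξ η)
      = star η ⬝ᵥ (Φ (vecMulVec (star ξ) ξ)).mulVec η := by
  have hX : vecMulVec (star ξ) ξ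
      = ∑ i, ∑ j, (star ξ i * ξ j) • single i j (1:ℂ) := by
    ext a b
    simp [vecMulVec_apply, single, Matrix.sum_apply, ite_and,
      Finset.sum_ite_eq', Finset.sum_ite_eq]
  have hΦ : Φ (vecMulVec (star ξ) ξ)
      = ∑ i, ∑ j, (star ξ i * ξ j) • Φ (single i j (1:ℂ)) := by
    rw [hX, show Φ = ⇑(IsLinearMap.mk' Φ hlin) from rfl, map_sum]
    refine Finset.sum_congr rfl fun i _ => ?_
    rw [map_sum]
    exact Finset.sum_congr rfl fun j _ => LinearMap.map_smul _ _ _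
  have hsum : ∀ (f : Fin m → Fin m → Matrix (Fin n) (Fin n) ℂ),
      star η ⬝ᵥ (∑ i, ∑ j, f i j).mulVec η
        = ∑ i, ∑ j, star η ⬝ᵥ (f i j).mulVec η := by
    intro f
    rw [dot_sum']
    exact Finset.sum_congr rfl fun i _ => dot_sum' η _
  rw [hΦ, hsum]
  simp only [dot_smul']
  simp only [dotProduct, mulVec, tensorVec, choiMatrix, Matrix.of_apply,
    Pi.star_apply, star_mul', Fintype.sum_prod_type, Finset.mul_sum, Finset.sum_mul]
  refine Finset.sum_congr rfl fun i _ => ?_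
  rw [Finset.sum_comm]
  refine Finset.sum_congr rfl fun j _ => ?_
  refine Finset.sum_congr rfl fun a _ => ?_
  refine Finset.sum_congr rfl fun b _ => ?_
  ring

end AuxiliaryLemmas

/-- A linear map `Φ : M_m → M_n` is positive iff its Choi matrix is
block positive: `⟨ξ⊗η, C_Φ (ξ⊗η)⟩ ≥ 0` for all `ξ ∈ ℂ^m`, `η ∈ ℂ^n`. -/
theorem isPosMap_iff_blockPositive (m n : ℕ)
    (Φ : Matrix (Fin m) (Fin m) ℂ → Matrix (Fin n) (Fin n) ℂ) (hlin : IsLinearMap ℂ Φ) :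
    IsPosMap Φ ↔ ∀ (ξ : Fin m → ℂ) (η : Fin n → ℂ),
      0 ≤ star (tensorVec ξ η) ⬝ᵥ (choiMatrix Φ).mulVec (tensorVec ξ η) := by
  constructor
  · intro hpos ξ η
    rw [quadForm_eq Φ hlin ξ η]
    have hX : (vecMulVec (star ξ) ξ).PosSemidef := by
      have hrw : vecMulVec (star ξ) ξ = (replicateRow Unit ξ)ᴴ * replicateRow Unit ξ := by
        ext a b
        simp [vecMulVec_apply, mul_apply, conjTranspose_apply, replicateRow_apply]
      rw [hrw]
      exact posSemidef_conjTranspose_mul_self _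
    exact (posSemidef_iff_dotProduct_mulVec.mp (hpos _ hX)).2 η
  · intro h X hX
    classical
    open scoped MatrixOrder in obtain ⟨B, hB⟩ := CStarAlgebra.nonneg_iff_eq_star_mul_self.mp hX.nonneg
    rw [star_eq_conjTranspose] at hB
    subst hB
    have hdec : Bᴴ * B = ∑ k, vecMulVec (star (B k)) (B k) := by
      ext a b
      simp [mul_apply, vecMulVec_apply, conjTranspose_apply, Matrix.sum_apply]
    have hΦsum : Φ (Bᴴ * B) = ∑ k, Φ (vecMulVec (star (B k)) (B k)) := by
      rw [hdec, show Φ = ⇑(IsLinearMap.mk' Φ hlin) from rfl, map_sum]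
    have hq : ∀ η : Fin n → ℂ, 0 ≤ star η ⬝ᵥ (Φ (Bᴴ * B)).mulVec η := by
      intro η
      rw [hΦsum, dot_sum']
      refine Finset.sum_nonneg fun k _ => ?_
      rw [← quadForm_eq Φ hlin (B k) η]
      exact h _ _
    exact posSemidef_iff_dotProduct_mulVec.mpr ⟨hermitian_of_nonneg _ hq, hq⟩
end
end

section
/- Let A be a 3×3 real matrix with rows (a_1,b_1,c_1), (c_2,a_2,b_2), (b_3,c_3,a_3) and all entries nonnegative. The map Φ_A is completely positive if and only if the 3×3 matrix with diagonal entries a_1, a_2, a_3 and all off-diagonal entries equal to −1 is positive semidefinite. -/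
open Matrix
open scoped ComplexOrder

noncomputable section

lemma psd_smul_nonneg {n : Type*} [Fintype n] {M : Matrix n n ℂ} (hM : M.PosSemidef)
    {c : ℝ} (hc : 0 ≤ c) : ((c : ℂ) • M).PosSemidef := by
  refine Matrix.PosSemidef.of_dotProduct_mulVec_nonneg ?_ ?_
  · unfold Matrix.IsHermitian
    rw [Matrix.conjTranspose_smul, hM.1.eq]
    congr 1
    simp
  · intro x
    rw [Matrix.smul_mulVec, dotProduct_smul]
    exact mul_nonneg (Complex.zero_le_real.mpr hc) (hM.dotProduct_mulVec_nonneg x)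

lemma kraus_isCompletelyPositive {n : ℕ} {ι : Type} [Fintype ι]
    (c : ι → ℝ) (hc : ∀ s, 0 ≤ c s)
    (V : ι → Matrix (Fin n) (Fin n) ℂ)
    (Φ : Matrix (Fin n) (Fin n) ℂ → Matrix (Fin n) (Fin n) ℂ)
    (hΦ : ∀ X, Φ X = ∑ s, (c s : ℂ) • (V s * X * (V s)ᴴ)) :
    IsCompletelyPositive Φ := by
  intro k X hX
  have key : blockApply k Φ X =
      ∑ s, (c s : ℂ) •
        ((Matrix.of fun (p : Fin k × Fin n) (q : Fin k × Fin n) =>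
            if p.1 = q.1 then V s p.2 q.2 else 0) * X *
          (Matrix.of fun (p : Fin k × Fin n) (q : Fin k × Fin n) =>
            if p.1 = q.1 then V s p.2 q.2 else 0)ᴴ) := by
    ext ⟨p, i⟩ ⟨q, j⟩
    simp only [blockApply, Matrix.of_apply, hΦ, Matrix.sum_apply, Matrix.smul_apply]
    refine Finset.sum_congr rfl fun s _ => ?_
    congr 1
    simp only [Matrix.mul_apply, Matrix.conjTranspose_apply, Matrix.of_apply,
      Fintype.sum_prod_type, ite_mul, mul_ite, zero_mul, mul_zero,
      apply_ite (starRingEnd ℂ), apply_ite (star : ℂ → ℂ), map_zero, star_zero,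
      Finset.sum_ite_eq, Finset.sum_ite_eq', Finset.mem_univ, if_true,
      Finset.sum_ite_irrel, Finset.sum_const_zero]
  rw [key]
  refine Finset.sum_induction _ _ (fun a b ha hb => ha.add hb) Matrix.PosSemidef.zero
    fun s _ => psd_smul_nonneg (hX.mul_mul_conjTranspose_same _) (hc s)

/-- `Φ_A` is completely positive iff the matrix with diagonal `a₁,a₂,a₃`
and off-diagonal entries `-1` is positive semidefinite. -/
theorem phiMap_cp_iff (a₁ a₂ a₃ b₁ b₂ b₃ c₁ c₂ c₃ : ℝ)
    (ha₁ : 0 ≤ a₁) (ha₂ : 0 ≤ a₂) (ha₃ : 0 ≤ a₃)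
    (hb₁ : 0 ≤ b₁) (hb₂ : 0 ≤ b₂) (hb₃ : 0 ≤ b₃)
    (hc₁ : 0 ≤ c₁) (hc₂ : 0 ≤ c₂) (hc₃ : 0 ≤ c₃) :
    IsCompletelyPositive (PhiMap !![a₁, b₁, c₁; c₂, a₂, b₂; b₃, c₃, a₃]) ↔
      (!![a₁, -1, -1; -1, a₂, -1; -1, -1, a₃] : Matrix (Fin 3) (Fin 3) ℝ).PosSemidef  := by
  set A' : Matrix (Fin 3) (Fin 3) ℝ := !![a₁, b₁, c₁; c₂, a₂, b₂; b₃, c₃, a₃] with hA'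
  set B : Matrix (Fin 3) (Fin 3) ℝ := !![a₁, -1, -1; -1, a₂, -1; -1, -1, a₃] with hBdef
  have hBA : ∀ p q : Fin 3, B p q = if p = q then A' p q else -1 := by
    intro p q
    fin_cases p <;> fin_cases q <;> norm_num [hA', hBdef, Fin.ext_iff]
  have hA'nonneg : ∀ p q : Fin 3, 0 ≤ A' p q := by
    intro p q
    fin_cases p <;> fin_cases q <;> simp [hA'] <;> assumption
  constructor
  · -- CP → PSD
    intro hCP
    set X3 : Matrix (Fin 3 × Fin 3) (Fin 3 × Fin 3) ℂ :=
      Matrix.of fun p q => (if p.1 = p.2 then (1 : ℂ) else 0) *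
        (if q.1 = q.2 then (1 : ℂ) else 0) with hX3def
    have hX3 : X3.PosSemidef := by
      have : X3 = (Matrix.of fun (_ : Fin 1) (p : Fin 3 × Fin 3) =>
          if p.1 = p.2 then (1 : ℂ) else 0)ᴴ *
          (Matrix.of fun (_ : Fin 1) (p : Fin 3 × Fin 3) =>
          if p.1 = p.2 then (1 : ℂ) else 0) := by
        ext p q
        simp [hX3def, Matrix.mul_apply, Matrix.conjTranspose_apply,
          apply_ite (star : ℂ → ℂ)]
      rw [this]
      exact Matrix.posSemidef_conjTranspose_mul_self _
    have hY := hCP 3 X3 hX3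
    have hYe : ∀ p q : Fin 3, blockApply 3 (PhiMap A') X3 (p, p) (q, q) =
        if p = q then (A' p p : ℂ) else -1 := by
      intro p q
      by_cases hpq : p = q
      · subst hpq
        simp [blockApply, PhiMap, hX3def, mul_ite, ite_mul, Finset.sum_ite_eq']
      · simp [blockApply, PhiMap, hX3def, hpq]
    have hherm : B.IsHermitian := by
      ext p q
      fin_cases p <;> fin_cases q <;>
        norm_num [Matrix.conjTranspose_apply, hBdef]
    refine Matrix.PosSemidef.of_dotProduct_mulVec_nonneg hherm fun x => ?_
    have hquad := hY.dotProduct_mulVec_nonneg (fun p : Fin 3 × Fin 3 => if p.1 = p.2 then (x p.1 : ℂ) else 0)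
    have hkey : dotProduct
        (star fun p : Fin 3 × Fin 3 => if p.1 = p.2 then (x p.1 : ℂ) else 0)
        ((blockApply 3 (PhiMap A') X3) *ᵥ
          fun p : Fin 3 × Fin 3 => if p.1 = p.2 then (x p.1 : ℂ) else 0) =
        ((dotProduct (star x) (B *ᵥ x) : ℝ) : ℂ) := by
      simp only [dotProduct, Matrix.mulVec, Pi.star_apply,
        apply_ite (star : ℂ → ℂ), Fintype.sum_prod_type, mul_ite, ite_mul,
        zero_mul, mul_zero, star_zero, Finset.sum_ite_irrel, Finset.sum_const_zero,
        Finset.sum_ite_eq, Finset.sum_ite_eq', Finset.mem_univ, if_true, star_trivial]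
      push_cast
      rw [Fin.sum_univ_three, Fin.sum_univ_three]
      simp only [Fin.sum_univ_three, hYe, hBA]
      norm_num
      push_cast
      ring
    rw [hkey] at hquad
    exact Complex.zero_le_real.mp hquad
  · -- PSD → CP
    intro hPSD
    obtain ⟨C, hC⟩ : ∃ C : Matrix (Fin 3) (Fin 3) ℝ, B = Cᴴ * C := by
      open scoped MatrixOrder in
      exact CStarAlgebra.nonneg_iff_eq_star_mul_self.mp hPSD.nonneg
    have hBsum : ∀ i j : Fin 3, (B i j : ℂ) = ∑ r, (C r i : ℂ) * (C r j : ℂ) := by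
      intro i j
      rw [hC]
      simp only [Matrix.mul_apply, Matrix.conjTranspose_apply, star_trivial]
      push_cast
      rfl
    apply kraus_isCompletelyPositive
      (ι := Fin 3 ⊕ (Fin 3 × Fin 3))
      (c := Sum.elim (fun _ => 1) (fun ik => if ik.1 = ik.2 then 0 else A' ik.1 ik.2))
      (V := Sum.elim (fun r => Matrix.diagonal (fun i => (C r i : ℂ)))
        (fun ik => Matrix.single ik.1 ik.2 1))
    · intro s
      rcases s with r | ⟨i, k⟩
      · norm_num
      · dsimp only [Sum.elim_inr]
        split
        · exact le_rfl
        · exact hA'nonneg _ _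
    · intro X
      ext i j
      have h1 : ∀ r : Fin 3,
          (Matrix.diagonal (fun a => (C r a : ℂ)) * X *
            (Matrix.diagonal (fun a => (C r a : ℂ)))ᴴ) i j =
          (C r i : ℂ) * (C r j : ℂ) * X i j := by
        intro r
        rw [Matrix.diagonal_conjTranspose]
        simp [Matrix.mul_diagonal, Matrix.diagonal_mul, Complex.star_def,
          Complex.conj_ofReal]
        ring
      have h2 : ∀ ik : Fin 3 × Fin 3,
          (Matrix.single ik.1 ik.2 (1 : ℂ) * X *
            (Matrix.single ik.1 ik.2 (1 : ℂ))ᴴ) i j =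
          if i = ik.1 ∧ j = ik.1 then X ik.2 ik.2 else 0 := by
        rintro ⟨i0, k0⟩
        simp only [Matrix.mul_apply, Matrix.conjTranspose_apply,
          Matrix.single, Matrix.of_apply, ite_mul, mul_ite, one_mul,
          mul_one, zero_mul, mul_zero, apply_ite (star : ℂ → ℂ), star_zero,
          star_one]
        by_cases hi : i = i0 <;> by_cases hj : j = i0 <;>
          simp [hi, hj, eq_comm, Finset.sum_ite_eq, Finset.sum_ite_eq',
            Finset.sum_ite_irrel, Finset.sum_const_zero]
      simp only [Matrix.sum_apply, Fintype.sum_sum_type, Sum.elim_inl, Sum.elim_inr,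
        Matrix.smul_apply, h1, h2, Complex.ofReal_one, one_smul, one_mul, smul_eq_mul]
      rw [← Finset.sum_mul, ← hBsum]
      by_cases hij : i = j
      · subst hij
        simp only [PhiMap, Matrix.of_apply, if_pos rfl]
        have hsum2 : ∑ ik : Fin 3 × Fin 3,
            ((if ik.1 = ik.2 then (0:ℝ) else A' ik.1 ik.2 : ℝ) : ℂ) *
              (if i = ik.1 ∧ i = ik.1 then X ik.2 ik.2 else 0) =
            ∑ k : Fin 3, (if i = k then (0:ℂ) else (A' i k : ℂ)) * X k k := by
          rw [Fintype.sum_prod_type]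
          rw [Finset.sum_eq_single i]
          · refine Finset.sum_congr rfl fun k _ => ?_
            by_cases h : i = k <;> simp [h]
          · intro b _ hb
            simp [Ne.symm hb]
          · intro h
            exact absurd (Finset.mem_univ i) h
        rw [hsum2, hBA i i, if_pos rfl]
        have hexp : ∀ k : Fin 3, (A' i k : ℂ) * X k k =
            (if i = k then (A' i k : ℂ) * X k k else 0) +
            (if i = k then (0:ℂ) else (A' i k : ℂ)) * X k k := by
          intro k
          by_cases h : i = k <;> simp [h]
        rw [Finset.sum_congr rfl fun k _ => hexp k, Finset.sum_add_distrib,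
          Finset.sum_ite_eq Finset.univ i fun k => (A' i k : ℂ) * X k k]
        simp
      · simp only [PhiMap, Matrix.of_apply, if_neg hij, hBA i j, if_neg hij]
        have hsum2 : ∑ ik : Fin 3 × Fin 3,
            ((if ik.1 = ik.2 then (0:ℝ) else A' ik.1 ik.2 : ℝ) : ℂ) *
              (if i = ik.1 ∧ j = ik.1 then X ik.2 ik.2 else 0) = 0 := by
          refine Finset.sum_eq_zero fun ik _ => ?_
          rcases eq_or_ne i ik.1 with hi | hi
          · have hni : ¬(i = ik.1 ∧ j = ik.1) := fun h => hij (h.1.trans h.2.symm)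
            rw [if_neg hni, mul_zero]
          · simp [hi]
        rw [hsum2]
        push_cast
        ring
end
end

section
/- Let A be a 3×3 real matrix with rows (a_1,b_1,c_1), (c_2,a_2,b_2), (b_3,c_3,a_3) and all entries nonnegative. If the map Φ_A is positive, then the generalized Choi map Φ_{[ā,b̄,c̄]} is positive, where ā = (a_1+a_2+a_3)/3, b̄ = (b_1+b_2+b_3)/3, c̄ = (c_1+c_2+c_3)/3. -/
open Matrix
open scoped ComplexOrder

noncomputable section

lemma psd_smul_real_aux {n : ℕ} {M : Matrix (Fin n) (Fin n) ℂ} (hM : M.PosSemidef)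
    {r : ℝ} (hr : 0 ≤ r) : ((r : ℂ) • M).PosSemidef := by
  constructor
  · unfold Matrix.IsHermitian
    rw [conjTranspose_smul, hM.1.eq]
    simp
  · intro x
    simp only [Matrix.smul_apply, smul_eq_mul]
    have h := mul_nonneg (show (0:ℂ) ≤ (r:ℂ) by exact_mod_cast hr) (hM.2 x)
    simp only [Finsupp.mul_sum] at h
    convert h using 1
    exact Finsupp.sum_congr fun i _ => Finsupp.sum_congr fun j _ => by ring

/-- If `Φ_A` is positive, then the generalized Choi map `Φ_{[ā,b̄,c̄]}`
with the averaged coefficients is positive. -/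
theorem phiMap_pos_implies_averaged_pos (a₁ a₂ a₃ b₁ b₂ b₃ c₁ c₂ c₃ : ℝ)
    (ha₁ : 0 ≤ a₁) (ha₂ : 0 ≤ a₂) (ha₃ : 0 ≤ a₃)
    (hb₁ : 0 ≤ b₁) (hb₂ : 0 ≤ b₂) (hb₃ : 0 ≤ b₃)
    (hc₁ : 0 ≤ c₁) (hc₂ : 0 ≤ c₂) (hc₃ : 0 ≤ c₃)
    (hpos : IsPosMap (PhiMap !![a₁, b₁, c₁; c₂, a₂, b₂; b₃, c₃, a₃])) :
    IsPosMap (genChoiMap ((a₁ + a₂ + a₃) / 3) ((b₁ + b₂ + b₃) / 3) ((c₁ + c₂ + c₃) / 3)) := by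
  intro X hX
  set A := !![a₁, b₁, c₁; c₂, a₂, b₂; b₃, c₃, a₃] with hA
  set Y : Fin 3 → Matrix (Fin 3) (Fin 3) ℂ := fun s =>
    (PhiMap A (X.submatrix (· + s) (· + s))).submatrix (· - s) (· - s) with hY
  have hYpsd : ∀ s, (Y s).PosSemidef := fun s =>
    (hpos _ (hX.submatrix _)).submatrix _
  have key : genChoiMap ((a₁ + a₂ + a₃) / 3) ((b₁ + b₂ + b₃) / 3) ((c₁ + c₂ + c₃) / 3) X
      = (((1:ℝ)/3 : ℝ) : ℂ) • (Y 0 + Y 1 + Y 2) := by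
    ext i j
    fin_cases i <;> fin_cases j <;>
      simp [genChoiMap, PhiMap, hY, hA, Fin.sum_univ_three, Matrix.submatrix,
        Fin.isValue, show ((2:Fin 3) - 1 = 1) from rfl, show ((1:Fin 3) + 1 = 2) from rfl,
        show ((2:Fin 3) + 1 = 0) from rfl, show ((0:Fin 3) - 1 = 2) from rfl,
        show ((1:Fin 3) - 2 = 2) from rfl, show ((0:Fin 3) - 2 = 1) from rfl,
        show ((2:Fin 3) - 2 = 0) from rfl, show ((1:Fin 3) + 2 = 0) from rfl,
        show ((2:Fin 3) + 2 = 1) from rfl, show ((0:Fin 3) + 2 = 2) from rfl] <;>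
      push_cast <;> ring
  rw [key]
  exact psd_smul_real_aux (((hYpsd 0).add (hYpsd 1)).add (hYpsd 2)) (by norm_num)
end
end

section
/- Let A be a 3×3 real matrix with rows (a_1,b_1,c_1), (c_2,a_2,b_2), (b_3,c_3,a_3) and all entries nonnegative. Suppose there exist reals a,b,c ≥ 0 and positive reals p_1,p_2,p_3 such that the generalized Choi map Φ_{[a,b,c]} is positive and the matrix M = A − V^{-1} A_{[a,b,c]} V has all entries nonnegative, where V = diag(p_1,p_2,p_3) and A_{[a,b,c]} is the matrix with rows (a,b,c), (c,a,b), (b,c,a). Then Φ_A is positive. -/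
open Matrix
open scoped ComplexOrder

noncomputable section

/-- If there are `a, b, c ≥ 0` and `p₁, p₂, p₃ > 0` such that `Φ_{[a,b,c]}`
is positive and `M = A - V⁻¹ A_{[a,b,c]} V` has nonnegative entries, where
`V = diag(p₁,p₂,p₃)`, then `Φ_A` is positive. -/
theorem phiMap_pos_of_exists_dominating (a₁ a₂ a₃ b₁ b₂ b₃ c₁ c₂ c₃ : ℝ)
    (ha₁ : 0 ≤ a₁) (ha₂ : 0 ≤ a₂) (ha₃ : 0 ≤ a₃)
    (hb₁ : 0 ≤ b₁) (hb₂ : 0 ≤ b₂) (hb₃ : 0 ≤ b₃)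
    (hc₁ : 0 ≤ c₁) (hc₂ : 0 ≤ c₂) (hc₃ : 0 ≤ c₃)
    (a b c : ℝ) (ha : 0 ≤ a) (hb : 0 ≤ b) (hc : 0 ≤ c)
    (p₁ p₂ p₃ : ℝ) (hp₁ : 0 < p₁) (hp₂ : 0 < p₂) (hp₃ : 0 < p₃)
    (hpos : IsPosMap (genChoiMap a b c))
    (hM : ∀ i j, 0 ≤ (!![a₁, b₁, c₁; c₂, a₂, b₂; b₃, c₃, a₃] -
      (Matrix.diagonal ![p₁, p₂, p₃])⁻¹ * !![a, b, c; c, a, b; b, c, a] *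
        Matrix.diagonal ![p₁, p₂, p₃]) i j) :
    IsPosMap (PhiMap !![a₁, b₁, c₁; c₂, a₂, b₂; b₃, c₃, a₃]) := by
  intro X hX
  set A : Matrix (Fin 3) (Fin 3) ℝ := !![a₁, b₁, c₁; c₂, a₂, b₂; b₃, c₃, a₃] with hA
  set p : Fin 3 → ℝ := ![p₁, p₂, p₃] with hp
  have hppos : ∀ i, 0 < p i := by
    intro i; fin_cases i <;> simpa [hp]
  set s : Fin 3 → ℝ := fun i => Real.sqrt (p i) with hs
  have hspos : ∀ i, 0 < s i := fun i => Real.sqrt_pos.mpr (hppos i)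
  have hsne : ∀ i, (s i : ℂ) ≠ 0 := fun i => Complex.ofReal_ne_zero.mpr (hspos i).ne'
  have hss : ∀ i, (s i : ℂ) * s i = (p i : ℂ) := fun i => by
    rw [← Complex.ofReal_mul, Real.mul_self_sqrt (hppos i).le]
  set D : Matrix (Fin 3) (Fin 3) ℂ := Matrix.diagonal (fun i => (s i : ℂ)) with hD
  set E : Matrix (Fin 3) (Fin 3) ℂ := Matrix.diagonal (fun i => ((s i : ℂ))⁻¹) with hE
  have hDH : Dᴴ = D := by
    rw [hD, diagonal_conjTranspose,
      show star (fun i => ((s i : ℝ) : ℂ)) = fun i => ((s i : ℝ) : ℂ) from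
        funext fun i => by simp]
  have hEH : Eᴴ = E := by
    rw [hE, diagonal_conjTranspose,
      show star (fun i => ((s i : ℝ) : ℂ)⁻¹) = fun i => ((s i : ℝ) : ℂ)⁻¹ from
        funext fun i => by simp]
  have hY : (D * X * D).PosSemidef := by
    have := hX.mul_mul_conjTranspose_same D
    rwa [hDH] at this
  have hZ : (E * genChoiMap a b c (D * X * D) * E).PosSemidef := by
    have := (hpos _ hY).mul_mul_conjTranspose_same E
    rwa [hEH] at this
  have hd : ∀ k, 0 ≤ X k k := by
    intro k
    simpa [dotProduct, mulVec, Pi.single_apply, Finset.sum_ite_eq] using hX.dotProduct_mulVec_nonneg (Pi.single k 1)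
  have hinv : (Matrix.diagonal p)⁻¹ = Matrix.diagonal (fun i => (p i)⁻¹) := by
    apply Matrix.inv_eq_right_inv
    rw [diagonal_mul_diagonal]
    ext i j
    rcases eq_or_ne i j with h | h <;>
      simp [diagonal_apply, h, Matrix.one_apply, mul_inv_cancel₀ (hppos _).ne']
  have hM' : ∀ i j, 0 ≤ A i j - (p i)⁻¹ * !![a, b, c; c, a, b; b, c, a] i j * p j := by
    intro i j
    have h := hM i j
    rwa [hinv, Matrix.sub_apply, Matrix.mul_diagonal, Matrix.diagonal_mul] at h
  have key : PhiMap A X =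
      Matrix.diagonal (fun i => ∑ k, ((A i k - (p i)⁻¹ * !![a, b, c; c, a, b; b, c, a] i k * p k : ℝ) : ℂ) * X k k) +
        E * genChoiMap a b c (D * X * D) * E := by
    ext i j
    rcases eq_or_ne i j with rfl | hij
    · simp only [PhiMap, genChoiMap, Matrix.of_apply, if_pos rfl, Matrix.add_apply,
        Matrix.diagonal_apply_eq, hE, hD, Matrix.mul_diagonal, Matrix.diagonal_mul]
      rw [if_pos trivial, if_pos trivial, Finset.mul_sum, Finset.sum_mul,
        ← Finset.sum_add_distrib]
      refine Finset.sum_congr rfl fun k _ => ?_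
      push_cast
      rw [← hss i, ← hss k]
      field_simp
      ring
    · simp only [PhiMap, genChoiMap, Matrix.of_apply, if_neg hij, Matrix.add_apply,
        Matrix.diagonal_apply_ne _ hij, hE, hD, Matrix.mul_diagonal, Matrix.diagonal_mul]
      rw [zero_add]
      have h2 : ((↑(s i) : ℂ))⁻¹ * -(↑(s i) * X i j * ↑(s j)) * ((↑(s j) : ℂ))⁻¹
          = -(((↑(s i) : ℂ))⁻¹ * ↑(s i) * (↑(s j) * ((↑(s j) : ℂ))⁻¹) * X i j) := by ring
      rw [h2, inv_mul_cancel₀ (hsne i), mul_inv_cancel₀ (hsne j), one_mul, one_mul]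
  rw [key]
  refine Matrix.PosSemidef.add ?_ hZ
  rw [posSemidef_diagonal_iff]
  intro i
  refine Finset.sum_nonneg fun k _ => mul_nonneg ?_ (hd k)
  exact_mod_cast hM' i k
end
end

section
/- Let A be a 3×3 real matrix with rows (a_1,b_1,c_1), (c_2,a_2,b_2), (b_3,c_3,a_3) and all entries nonnegative. Suppose there exist reals a,b,c ≥ 0 such that: (1) the generalized Choi map Φ_{[a,b,c]} is positive; (2) min{a_1,a_2,a_3} ≥ a, (b_1b_2b_3)^{1/3} ≥ b, and (c_1c_2c_3)^{1/3} ≥ c; (3) b_i c_{i+1} ≥ bc for i = 1,2,3 (indices taken cyclically mod 3). Then Φ_A is positive. -/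
open Matrix
open scoped ComplexOrder

noncomputable section

lemma interval3 {L₁ L₂ L₃ U₁ U₂ U₃ : ℝ}
    (hL₁ : 0 < L₁) (hL₂ : 0 < L₂) (hL₃ : 0 < L₃)
    (h₁ : L₁ ≤ U₁) (h₂ : L₂ ≤ U₂) (h₃ : L₃ ≤ U₃)
    (hL : L₁ * L₂ * L₃ ≤ 1) (hU : 1 ≤ U₁ * U₂ * U₃) :
    ∃ y₁ y₂ y₃ : ℝ, L₁ ≤ y₁ ∧ y₁ ≤ U₁ ∧ L₂ ≤ y₂ ∧ y₂ ≤ U₂ ∧ L₃ ≤ y₃ ∧ y₃ ≤ U₃ ∧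
      y₁ * y₂ * y₃ = 1 := by
  set y₁ := min U₁ (1 / (L₂ * L₃)) with hy₁def
  have hU₁ : 0 < U₁ := lt_of_lt_of_le hL₁ h₁
  have hU₂ : 0 < U₂ := lt_of_lt_of_le hL₂ h₂
  have hU₃ : 0 < U₃ := lt_of_lt_of_le hL₃ h₃
  have hy₁pos : 0 < y₁ := lt_min hU₁ (by positivity)
  have hy₁L : L₁ ≤ y₁ := by
    apply le_min h₁
    rw [le_div_iff₀ (by positivity)]
    nlinarith
  set P := 1 / y₁ with hPdef
  have hPpos : 0 < P := by positivity
  have hPl : L₂ * L₃ ≤ P := by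
    rw [hPdef, le_div_iff₀ hy₁pos]
    calc L₂ * L₃ * y₁ ≤ L₂ * L₃ * (1 / (L₂ * L₃)) := by
          apply mul_le_mul_of_nonneg_left (min_le_right _ _) (by positivity)
      _ = 1 := by field_simp
  have hPu : P ≤ U₂ * U₃ := by
    rcases min_cases U₁ (1 / (L₂ * L₃)) with ⟨h, _⟩ | ⟨h, _⟩
    · rw [hPdef, hy₁def, h, div_le_iff₀ hU₁]
      nlinarith
    · rw [hPdef, hy₁def, h]
      rw [one_div_one_div]
      nlinarith
  -- second stage
  set y₂ := min U₂ (P / L₃) with hy₂def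
  have hy₂pos : 0 < y₂ := lt_min hU₂ (by positivity)
  have hy₂L : L₂ ≤ y₂ := by
    apply le_min h₂
    rw [le_div_iff₀ hL₃]
    nlinarith
  set y₃ := P / y₂ with hy₃def
  have hy₃pos : 0 < y₃ := by positivity
  have hy₃L : L₃ ≤ y₃ := by
    rw [hy₃def, le_div_iff₀ hy₂pos]
    calc L₃ * y₂ ≤ L₃ * (P / L₃) := by
          apply mul_le_mul_of_nonneg_left (min_le_right _ _) hL₃.le
      _ = P := by field_simp
  have hy₃U : y₃ ≤ U₃ := by
    rw [hy₃def, div_le_iff₀ hy₂pos]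
    rcases min_cases U₂ (P / L₃) with ⟨h, _⟩ | ⟨h, _⟩
    · rw [hy₂def, h]; nlinarith
    · rw [hy₂def, h]
      nlinarith [mul_le_mul_of_nonneg_right h₃ (div_nonneg hPpos.le hL₃.le),
        (by field_simp : L₃ * (P / L₃) = P)]
  refine ⟨y₁, y₂, y₃, hy₁L, min_le_left _ _, hy₂L, min_le_left _ _, hy₃L, hy₃U, ?_⟩
  rw [hy₃def, hPdef]
  field_simp

set_option maxHeartbeats 1000000 in
lemma exists_p {b₁ b₂ b₃ c₁ c₂ c₃ b c : ℝ}
    (hb₁ : 0 ≤ b₁) (hb₂ : 0 ≤ b₂) (hb₃ : 0 ≤ b₃)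
    (hc₁ : 0 ≤ c₁) (hc₂ : 0 ≤ c₂) (hc₃ : 0 ≤ c₃)
    (hb : 0 ≤ b) (hc : 0 ≤ c)
    (hbb : b ^ 3 ≤ b₁ * b₂ * b₃) (hcc : c ^ 3 ≤ c₁ * c₂ * c₃)
    (hbc₁ : b * c ≤ b₁ * c₂) (hbc₂ : b * c ≤ b₂ * c₃) (hbc₃ : b * c ≤ b₃ * c₁) :
    ∃ p₁ p₂ p₃ : ℝ, 0 < p₁ ∧ 0 < p₂ ∧ 0 < p₃ ∧
      b * p₂ ≤ b₁ * p₁ ∧ b * p₃ ≤ b₂ * p₂ ∧ b * p₁ ≤ b₃ * p₃ ∧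
      c * p₁ ≤ c₂ * p₂ ∧ c * p₂ ≤ c₃ * p₃ ∧ c * p₃ ≤ c₁ * p₁ := by
  rcases hb.eq_or_lt with hb0 | hbpos
  · obtain rfl : b = 0 := hb0.symm
    rcases hc.eq_or_lt with hc0 | hcpos
    · obtain rfl : c = 0 := hc0.symm
      exact ⟨1, 1, 1, one_pos, one_pos, one_pos, by nlinarith, by nlinarith, by nlinarith,
        by nlinarith, by nlinarith, by nlinarith⟩
    · have hC : 0 < c₁ * c₂ * c₃ := lt_of_lt_of_le (by positivity) hcc
      have hc₁' : 0 < c₁ := by nlinarith [mul_nonneg hc₂ hc₃]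
      have hc₂' : 0 < c₂ := by nlinarith [mul_nonneg hc₁ hc₃]
      have hc₃' : 0 < c₃ := by nlinarith [mul_nonneg hc₁ hc₂]
      refine ⟨1, c / c₂, c ^ 2 / (c₂ * c₃), one_pos, by positivity, by positivity,
        by rw [zero_mul]; positivity, by rw [zero_mul]; positivity,
        by rw [zero_mul]; positivity, ?_, ?_, ?_⟩
      · have h : c₂ * (c / c₂) = c := by field_simp
        rw [h, mul_one]
      · have h : c₃ * (c ^ 2 / (c₂ * c₃)) = c * (c / c₂) := by field_simp
        rw [h]
      · have h : c * (c ^ 2 / (c₂ * c₃)) = c ^ 3 / (c₂ * c₃) := by ring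
        rw [h, mul_one, div_le_iff₀ (by positivity)]
        nlinarith
  · rcases hc.eq_or_lt with hc0 | hcpos
    · obtain rfl : c = 0 := hc0.symm
      have hB : 0 < b₁ * b₂ * b₃ := lt_of_lt_of_le (by positivity) hbb
      have hb₁' : 0 < b₁ := by nlinarith [mul_nonneg hb₂ hb₃]
      have hb₂' : 0 < b₂ := by nlinarith [mul_nonneg hb₁ hb₃]
      have hb₃' : 0 < b₃ := by nlinarith [mul_nonneg hb₁ hb₂]
      refine ⟨1, b₁ / b, b₁ * b₂ / b ^ 2, one_pos, by positivity, by positivity,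
        ?_, ?_, ?_, by rw [zero_mul]; positivity, by rw [zero_mul]; positivity,
        by rw [zero_mul]; positivity⟩
      · have h : b * (b₁ / b) = b₁ := by field_simp
        rw [h, mul_one]
      · have h : b * (b₁ * b₂ / b ^ 2) = b₂ * (b₁ / b) := by field_simp
        rw [h]
      · rw [← sub_nonneg]
        have h : b₃ * (b₁ * b₂ / b ^ 2) - b * 1 = (b₁ * b₂ * b₃ - b ^ 3) / b ^ 2 := by
          field_simp
        rw [h]
        apply div_nonneg (by linarith) (by positivity)
    · have hB : 0 < b₁ * b₂ * b₃ := lt_of_lt_of_le (by positivity) hbb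
      have hb₁' : 0 < b₁ := by nlinarith [mul_nonneg hb₂ hb₃]
      have hb₂' : 0 < b₂ := by nlinarith [mul_nonneg hb₁ hb₃]
      have hb₃' : 0 < b₃ := by nlinarith [mul_nonneg hb₁ hb₂]
      have hC : 0 < c₁ * c₂ * c₃ := lt_of_lt_of_le (by positivity) hcc
      have hc₁' : 0 < c₁ := by nlinarith [mul_nonneg hc₂ hc₃]
      have hc₂' : 0 < c₂ := by nlinarith [mul_nonneg hc₁ hc₃]
      have hc₃' : 0 < c₃ := by nlinarith [mul_nonneg hc₁ hc₂]
      have i₁ : c / c₂ ≤ b₁ / b := by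
        rw [div_le_div_iff₀ hc₂' hbpos]; nlinarith
      have i₂ : c / c₃ ≤ b₂ / b := by
        rw [div_le_div_iff₀ hc₃' hbpos]; nlinarith
      have i₃ : c / c₁ ≤ b₃ / b := by
        rw [div_le_div_iff₀ hc₁' hbpos]; nlinarith
      have iL : (c / c₂) * (c / c₃) * (c / c₁) ≤ 1 := by
        rw [div_mul_div_comm, div_mul_div_comm, div_le_one (by positivity)]; nlinarith
      have iU : 1 ≤ (b₁ / b) * (b₂ / b) * (b₃ / b) := by
        rw [div_mul_div_comm, div_mul_div_comm, le_div_iff₀ (by positivity)]; nlinarith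
      obtain ⟨y₁, y₂, y₃, hL1, hU1, hL2, hU2, hL3, hU3, hprod⟩ :=
        interval3 (by positivity) (by positivity) (by positivity) i₁ i₂ i₃ iL iU
      have hy₁pos : 0 < y₁ := lt_of_lt_of_le (by positivity) hL1
      have hy₂pos : 0 < y₂ := lt_of_lt_of_le (by positivity) hL2
      have hy₃pos : 0 < y₃ := lt_of_lt_of_le (by positivity) hL3
      have hbU1 : b * y₁ ≤ b₁ := by rw [le_div_iff₀ hbpos] at hU1; linarith
      have hbU2 : b * y₂ ≤ b₂ := by rw [le_div_iff₀ hbpos] at hU2; linarith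
      have hbU3 : b * y₃ ≤ b₃ := by rw [le_div_iff₀ hbpos] at hU3; linarith
      have hcL1 : c ≤ c₂ * y₁ := by rw [div_le_iff₀ hc₂'] at hL1; linarith
      have hcL2 : c ≤ c₃ * y₂ := by rw [div_le_iff₀ hc₃'] at hL2; linarith
      have hcL3 : c ≤ c₁ * y₃ := by rw [div_le_iff₀ hc₁'] at hL3; linarith
      refine ⟨1, y₁, y₁ * y₂, one_pos, hy₁pos, by positivity, ?_, ?_, ?_, ?_, ?_, ?_⟩
      · nlinarith
      · nlinarith
      · nlinarith [mul_le_mul_of_nonneg_right hbU3 (mul_pos hy₁pos hy₂pos).le]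
      · nlinarith
      · nlinarith
      · nlinarith [mul_le_mul_of_nonneg_right hcL3 (mul_pos hy₁pos hy₂pos).le]

lemma scale_bound {β B p q T : ℝ} (hp : 0 < p) (h : β * q ≤ B * p) (hT : 0 ≤ T) :
    β * (T * (q / p)) ≤ B * T := by
  rw [← sub_nonneg]
  have e : B * T - β * (T * (q / p)) = (B * p - β * q) * T / p := by field_simp
  rw [e]
  exact div_nonneg (mul_nonneg (by linarith) hT) hp.le

lemma rankone_psd (t₁ t₂ t₃ : ℝ) :
    (Matrix.of fun i j => ((![t₁, t₂, t₃] i * ![t₁, t₂, t₃] j : ℝ) : ℂ) :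
      Matrix (Fin 3) (Fin 3) ℂ).PosSemidef := by
  refine Matrix.PosSemidef.of_dotProduct_mulVec_nonneg ?_ ?_
  · ext i j
    simp [Matrix.conjTranspose_apply, Matrix.of_apply, mul_comm]
  · intro x
    have key : star x ⬝ᵥ ((Matrix.of fun i j => ((![t₁, t₂, t₃] i * ![t₁, t₂, t₃] j : ℝ) : ℂ) :
        Matrix (Fin 3) (Fin 3) ℂ) *ᵥ x) =
        ((Complex.normSq ((t₁ : ℂ) * x 0 + (t₂ : ℂ) * x 1 + (t₃ : ℂ) * x 2) : ℝ) : ℂ) := by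
      rw [Complex.normSq_eq_conj_mul_self]
      simp only [dotProduct, Matrix.mulVec, Fin.sum_univ_three, Pi.star_apply,
        Matrix.of_apply, Matrix.cons_val_zero, Matrix.cons_val_one, Matrix.head_cons,
        Matrix.cons_val_two, Matrix.tail_cons, RCLike.star_def, map_add, _root_.map_mul,
        Complex.conj_ofReal]
      push_cast
      ring
    rw [key]
    exact Complex.zero_le_real.mpr (Complex.normSq_nonneg _)

lemma circ_ineq {a b c : ℝ} (hpos : IsPosMap (genChoiMap a b c))
    (t₁ t₂ t₃ s₁ s₂ s₃ : ℝ) :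
    (t₁ * s₁ + t₂ * s₂ + t₃ * s₃) ^ 2 ≤
      a * (t₁ ^ 2 * s₁ ^ 2) + b * (t₂ ^ 2 * s₁ ^ 2) + c * (t₃ ^ 2 * s₁ ^ 2)
      + c * (t₁ ^ 2 * s₂ ^ 2) + a * (t₂ ^ 2 * s₂ ^ 2) + b * (t₃ ^ 2 * s₂ ^ 2)
      + b * (t₁ ^ 2 * s₃ ^ 2) + c * (t₂ ^ 2 * s₃ ^ 2) + a * (t₃ ^ 2 * s₃ ^ 2)
      + (t₁ ^ 2 * s₁ ^ 2 + t₂ ^ 2 * s₂ ^ 2 + t₃ ^ 2 * s₃ ^ 2) := by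
  have hX := hpos _ (rankone_psd t₁ t₂ t₃)
  have h := hX.dotProduct_mulVec_nonneg ![(s₁ : ℂ), (s₂ : ℂ), (s₃ : ℂ)]
  have key : star ![(s₁ : ℂ), (s₂ : ℂ), (s₃ : ℂ)] ⬝ᵥ
      (genChoiMap a b c (Matrix.of fun i j => ((![t₁, t₂, t₃] i * ![t₁, t₂, t₃] j : ℝ) : ℂ)) *ᵥ
        ![(s₁ : ℂ), (s₂ : ℂ), (s₃ : ℂ)]) =
      (((a * (t₁ ^ 2 * s₁ ^ 2) + b * (t₂ ^ 2 * s₁ ^ 2) + c * (t₃ ^ 2 * s₁ ^ 2)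
      + c * (t₁ ^ 2 * s₂ ^ 2) + a * (t₂ ^ 2 * s₂ ^ 2) + b * (t₃ ^ 2 * s₂ ^ 2)
      + b * (t₁ ^ 2 * s₃ ^ 2) + c * (t₂ ^ 2 * s₃ ^ 2) + a * (t₃ ^ 2 * s₃ ^ 2)
      + (t₁ ^ 2 * s₁ ^ 2 + t₂ ^ 2 * s₂ ^ 2 + t₃ ^ 2 * s₃ ^ 2))
      - (t₁ * s₁ + t₂ * s₂ + t₃ * s₃) ^ 2 : ℝ) : ℂ) := by
    simp only [genChoiMap, PhiMap, dotProduct, Matrix.mulVec, Fin.sum_univ_three,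
      Pi.star_apply, Matrix.of_apply, Matrix.cons_val_zero, Matrix.cons_val_one,
      Matrix.head_cons, Matrix.cons_val_two, Matrix.tail_cons, Matrix.cons_val',
      Matrix.empty_val', Matrix.cons_val_fin_one, Matrix.head_fin_const,
      RCLike.star_def, Complex.conj_ofReal]
    norm_num
    push_cast
    ring
  rw [key] at h
  have := Complex.zero_le_real.mp h
  linarith

lemma psd_diag_nonneg_s10 {n : ℕ} {X : Matrix (Fin n) (Fin n) ℂ} (hX : X.PosSemidef) (i : Fin n) :
    0 ≤ X i i := by
  have h := hX.dotProduct_mulVec_nonneg (Pi.single i 1)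
  simpa [dotProduct, Matrix.mulVec, Pi.single_apply, Finset.sum_ite_eq,
    apply_ite, mul_ite, ite_mul] using h

lemma psd_diag_real {n : ℕ} {X : Matrix (Fin n) (Fin n) ℂ} (hX : X.PosSemidef) (i : Fin n) :
    X i i = ((X i i).re : ℂ) :=
  Complex.eq_re_of_ofReal_le (by exact_mod_cast psd_diag_nonneg_s10 hX i)

lemma psd_entry_bound {n : ℕ} {X : Matrix (Fin n) (Fin n) ℂ} (hX : X.PosSemidef) (i j : Fin n) :
    ‖X i j‖ ≤ Real.sqrt (X i i).re * Real.sqrt (X j j).re := by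
  have hxi : 0 ≤ (X i i).re := (Complex.nonneg_iff.mp (psd_diag_nonneg_s10 hX i)).1
  have hxj : 0 ≤ (X j j).re := (Complex.nonneg_iff.mp (psd_diag_nonneg_s10 hX j)).1
  by_cases hij : i = j
  · subst hij
    rw [← Complex.re_eq_norm.mpr (psd_diag_nonneg_s10 hX i), Real.mul_self_sqrt hxi]
  -- set up the quadratic
  have hsym : X j i = (starRingEnd ℂ) (X i j) := by
    have := congrFun (congrFun hX.1 j) i
    rw [Matrix.conjTranspose_apply] at this
    rw [← this]; rfl
  set α := X i j with hα
  set m := ‖α‖ with hm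
  have key : ∀ s : ℝ, 0 ≤ (m ^ 2 * (X j j).re) * (s * s) + (-(2 * m ^ 2)) * s + (X i i).re := by
    intro s
    have hv := hX.dotProduct_mulVec_nonneg ((Pi.single i 1 : Fin n → ℂ) + Pi.single j (-(s : ℂ) * (starRingEnd ℂ) α))
    set z := -(s : ℂ) * (starRingEnd ℂ) α with hz
    have expand : star ((Pi.single i 1 : Fin n → ℂ) + Pi.single j z) ⬝ᵥ
        (X *ᵥ ((Pi.single i 1 : Fin n → ℂ) + Pi.single j z)) =
        X i i + z * α + (starRingEnd ℂ) z * X j i + (starRingEnd ℂ) z * z * X j j := by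
      rw [star_add, add_dotProduct, Matrix.mulVec_add, dotProduct_add, dotProduct_add]
      have s1 : star (Pi.single i 1 : Fin n → ℂ) = (Pi.single i 1 : Fin n → ℂ) := by
        ext k; simp [Pi.single_apply, apply_ite]
      have s2 : star (Pi.single j z : Fin n → ℂ) = (Pi.single j ((starRingEnd ℂ) z) : Fin n → ℂ) :=
        by simpa using (Pi.single_star (f := fun _ : Fin n => ℂ) j z).symm
      rw [s1, s2]
      have m1 : X *ᵥ (Pi.single i 1 : Fin n → ℂ) = fun k => X k i := by
        ext k; simp [Matrix.mulVec, Pi.single_apply, dotProduct, Finset.sum_ite_eq,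
          mul_ite, ite_mul]
      have m2 : X *ᵥ (Pi.single j z : Fin n → ℂ) = fun k => X k j * z := by
        ext k; simp [Matrix.mulVec, Pi.single_apply, dotProduct, Finset.sum_ite_eq,
          mul_ite, ite_mul]
      rw [m1, m2]
      have d1 : ∀ (w : Fin n → ℂ), (Pi.single i 1 : Fin n → ℂ) ⬝ᵥ w = w i := by
        intro w; simp [dotProduct, Pi.single_apply, ite_mul, Finset.sum_ite_eq]
      have d2 : ∀ (w : Fin n → ℂ), (Pi.single j ((starRingEnd ℂ) z) : Fin n → ℂ) ⬝ᵥ w =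
          (starRingEnd ℂ) z * w j := by
        intro w; simp [dotProduct, Pi.single_apply, ite_mul, Finset.sum_ite_eq]
      rw [d1, d2, d1, d2]
      rw [hα]; ring
    rw [expand] at hv
    have creal : X i i + z * α + (starRingEnd ℂ) z * X j i + (starRingEnd ℂ) z * z * X j j =
        (((m ^ 2 * (X j j).re) * (s * s) + (-(2 * m ^ 2)) * s + (X i i).re : ℝ) : ℂ) := by
      have habs : ((m : ℂ)) ^ 2 = α * (starRingEnd ℂ) α := by
        rw [hm, Complex.mul_conj, ← Complex.sq_norm]
        push_cast
        ring
      rw [hsym, hz, psd_diag_real hX i, psd_diag_real hX j]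
      simp only [_root_.map_mul, map_neg, Complex.conj_conj, Complex.conj_ofReal,
        Complex.ofReal_re]
      push_cast
      linear_combination (2 * (s : ℂ) - (s : ℂ) ^ 2 * ((X j j).re : ℂ)) * habs
    rw [creal] at hv
    exact Complex.zero_le_real.mp hv
  have hdisc := discrim_le_zero key
  rw [discrim] at hdisc
  have hmsq : m ^ 2 * m ^ 2 ≤ m ^ 2 * ((X i i).re * (X j j).re) := by nlinarith
  have hm0 : 0 ≤ m := norm_nonneg α
  have hfin : m ^ 2 ≤ (X i i).re * (X j j).re := by
    rcases eq_or_lt_of_le hm0 with h0 | hpos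
    · rw [← h0]; simpa using mul_nonneg hxi hxj
    · nlinarith [hmsq, mul_pos hpos hpos]
  calc m = Real.sqrt (m ^ 2) := by rw [Real.sqrt_sq hm0]
    _ ≤ Real.sqrt ((X i i).re * (X j j).re) := Real.sqrt_le_sqrt hfin
    _ = Real.sqrt (X i i).re * Real.sqrt (X j j).re := Real.sqrt_mul hxi _

set_option maxHeartbeats 1000000 in
lemma target_ineq {a₁ a₂ a₃ b₁ b₂ b₃ c₁ c₂ c₃ a b c : ℝ}
    (hpos : IsPosMap (genChoiMap a b c))
    (ha₁ : a ≤ a₁) (ha₂ : a ≤ a₂) (ha₃ : a ≤ a₃)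
    {p₁ p₂ p₃ : ℝ} (hp₁ : 0 < p₁) (hp₂ : 0 < p₂) (hp₃ : 0 < p₃)
    (h₁ : b * p₂ ≤ b₁ * p₁) (h₂ : b * p₃ ≤ b₂ * p₂) (h₃ : b * p₁ ≤ b₃ * p₃)
    (h₄ : c * p₁ ≤ c₂ * p₂) (h₅ : c * p₂ ≤ c₃ * p₃) (h₆ : c * p₃ ≤ c₁ * p₁)
    (t₁ t₂ t₃ s₁ s₂ s₃ : ℝ) :
    (t₁ * s₁ + t₂ * s₂ + t₃ * s₃) ^ 2 ≤
      a₁ * (t₁ ^ 2 * s₁ ^ 2) + b₁ * (t₂ ^ 2 * s₁ ^ 2) + c₁ * (t₃ ^ 2 * s₁ ^ 2)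
      + c₂ * (t₁ ^ 2 * s₂ ^ 2) + a₂ * (t₂ ^ 2 * s₂ ^ 2) + b₂ * (t₃ ^ 2 * s₂ ^ 2)
      + b₃ * (t₁ ^ 2 * s₃ ^ 2) + c₃ * (t₂ ^ 2 * s₃ ^ 2) + a₃ * (t₃ ^ 2 * s₃ ^ 2)
      + (t₁ ^ 2 * s₁ ^ 2 + t₂ ^ 2 * s₂ ^ 2 + t₃ ^ 2 * s₃ ^ 2) := by
  have H := circ_ineq hpos (t₁ * Real.sqrt p₁) (t₂ * Real.sqrt p₂) (t₃ * Real.sqrt p₃)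
    (s₁ / Real.sqrt p₁) (s₂ / Real.sqrt p₂) (s₃ / Real.sqrt p₃)
  have e₁ : Real.sqrt p₁ ^ 2 = p₁ := Real.sq_sqrt hp₁.le
  have e₂ : Real.sqrt p₂ ^ 2 = p₂ := Real.sq_sqrt hp₂.le
  have e₃ : Real.sqrt p₃ ^ 2 = p₃ := Real.sq_sqrt hp₃.le
  have n₁ : Real.sqrt p₁ ≠ 0 := by positivity
  have n₂ : Real.sqrt p₂ ≠ 0 := by positivity
  have n₃ : Real.sqrt p₃ ≠ 0 := by positivity
  have H' : (t₁ * s₁ + t₂ * s₂ + t₃ * s₃) ^ 2 ≤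
      a * (t₁ ^ 2 * s₁ ^ 2) + b * (t₂ ^ 2 * s₁ ^ 2 * (p₂ / p₁)) + c * (t₃ ^ 2 * s₁ ^ 2 * (p₃ / p₁))
      + c * (t₁ ^ 2 * s₂ ^ 2 * (p₁ / p₂)) + a * (t₂ ^ 2 * s₂ ^ 2)
      + b * (t₃ ^ 2 * s₂ ^ 2 * (p₃ / p₂))
      + b * (t₁ ^ 2 * s₃ ^ 2 * (p₁ / p₃)) + c * (t₂ ^ 2 * s₃ ^ 2 * (p₂ / p₃))
      + a * (t₃ ^ 2 * s₃ ^ 2)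
      + (t₁ ^ 2 * s₁ ^ 2 + t₂ ^ 2 * s₂ ^ 2 + t₃ ^ 2 * s₃ ^ 2) := by
    refine le_trans (le_of_eq ?_) (le_trans H (le_of_eq ?_))
    · congr 1
      field_simp
    · simp only [mul_pow, div_pow, e₁, e₂, e₃]
      field_simp
  have hd₁ : b * (t₂ ^ 2 * s₁ ^ 2 * (p₂ / p₁)) ≤ b₁ * (t₂ ^ 2 * s₁ ^ 2) :=
    scale_bound hp₁ h₁ (by positivity)
  have hd₂ : b * (t₃ ^ 2 * s₂ ^ 2 * (p₃ / p₂)) ≤ b₂ * (t₃ ^ 2 * s₂ ^ 2) :=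
    scale_bound hp₂ h₂ (by positivity)
  have hd₃ : b * (t₁ ^ 2 * s₃ ^ 2 * (p₁ / p₃)) ≤ b₃ * (t₁ ^ 2 * s₃ ^ 2) :=
    scale_bound hp₃ h₃ (by positivity)
  have hd₄ : c * (t₃ ^ 2 * s₁ ^ 2 * (p₃ / p₁)) ≤ c₁ * (t₃ ^ 2 * s₁ ^ 2) :=
    scale_bound hp₁ h₆ (by positivity)
  have hd₅ : c * (t₁ ^ 2 * s₂ ^ 2 * (p₁ / p₂)) ≤ c₂ * (t₁ ^ 2 * s₂ ^ 2) :=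
    scale_bound hp₂ h₄ (by positivity)
  have hd₆ : c * (t₂ ^ 2 * s₃ ^ 2 * (p₂ / p₃)) ≤ c₃ * (t₂ ^ 2 * s₃ ^ 2) :=
    scale_bound hp₃ h₅ (by positivity)
  have ga₁ : a * (t₁ ^ 2 * s₁ ^ 2) ≤ a₁ * (t₁ ^ 2 * s₁ ^ 2) :=
    mul_le_mul_of_nonneg_right ha₁ (by positivity)
  have ga₂ : a * (t₂ ^ 2 * s₂ ^ 2) ≤ a₂ * (t₂ ^ 2 * s₂ ^ 2) :=
    mul_le_mul_of_nonneg_right ha₂ (by positivity)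
  have ga₃ : a * (t₃ ^ 2 * s₃ ^ 2) ≤ a₃ * (t₃ ^ 2 * s₃ ^ 2) :=
    mul_le_mul_of_nonneg_right ha₃ (by positivity)
  linarith

set_option maxHeartbeats 2000000 in
/-- If there exist `a, b, c ≥ 0` with `Φ_{[a,b,c]}` positive,
`min{a₁,a₂,a₃} ≥ a`, `(b₁b₂b₃)^{1/3} ≥ b`, `(c₁c₂c₃)^{1/3} ≥ c` and `bᵢc_{i+1} ≥ bc`
cyclically, then `Φ_A` is positive. -/
theorem phiMap_pos_of_coefficient_bounds (a₁ a₂ a₃ b₁ b₂ b₃ c₁ c₂ c₃ : ℝ)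
    (ha₁ : 0 ≤ a₁) (ha₂ : 0 ≤ a₂) (ha₃ : 0 ≤ a₃)
    (hb₁ : 0 ≤ b₁) (hb₂ : 0 ≤ b₂) (hb₃ : 0 ≤ b₃)
    (hc₁ : 0 ≤ c₁) (hc₂ : 0 ≤ c₂) (hc₃ : 0 ≤ c₃)
    (a b c : ℝ) (ha : 0 ≤ a) (hb : 0 ≤ b) (hc : 0 ≤ c)
    (hpos : IsPosMap (genChoiMap a b c))
    (haa : a ≤ min a₁ (min a₂ a₃))
    (hbb : b ≤ (b₁ * b₂ * b₃) ^ ((1 : ℝ) / 3))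
    (hcc : c ≤ (c₁ * c₂ * c₃) ^ ((1 : ℝ) / 3))
    (hbc₁ : b * c ≤ b₁ * c₂) (hbc₂ : b * c ≤ b₂ * c₃) (hbc₃ : b * c ≤ b₃ * c₁) :
    IsPosMap (PhiMap !![a₁, b₁, c₁; c₂, a₂, b₂; b₃, c₃, a₃]) := by
  -- convert the cube-root hypotheses
  have hbb' : b ^ 3 ≤ b₁ * b₂ * b₃ := by
    have hBnn : (0 : ℝ) ≤ b₁ * b₂ * b₃ := by positivity
    calc b ^ 3 ≤ ((b₁ * b₂ * b₃) ^ ((1 : ℝ) / 3)) ^ 3 := by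
          exact pow_le_pow_left₀ hb hbb 3
      _ = b₁ * b₂ * b₃ := by
          rw [← Real.rpow_natCast ((b₁ * b₂ * b₃) ^ ((1 : ℝ) / 3)) 3,
            ← Real.rpow_mul hBnn]
          norm_num
  have hcc' : c ^ 3 ≤ c₁ * c₂ * c₃ := by
    have hCnn : (0 : ℝ) ≤ c₁ * c₂ * c₃ := by positivity
    calc c ^ 3 ≤ ((c₁ * c₂ * c₃) ^ ((1 : ℝ) / 3)) ^ 3 := by
          exact pow_le_pow_left₀ hc hcc 3
      _ = c₁ * c₂ * c₃ := by
          rw [← Real.rpow_natCast ((c₁ * c₂ * c₃) ^ ((1 : ℝ) / 3)) 3,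
            ← Real.rpow_mul hCnn]
          norm_num
  have haa₁ : a ≤ a₁ := le_trans haa (min_le_left _ _)
  have haa₂ : a ≤ a₂ := le_trans haa (le_trans (min_le_right _ _) (min_le_left _ _))
  have haa₃ : a ≤ a₃ := le_trans haa (le_trans (min_le_right _ _) (min_le_right _ _))
  obtain ⟨p₁, p₂, p₃, hp₁, hp₂, hp₃, hA₁, hA₂, hA₃, hA₄, hA₅, hA₆⟩ :=
    exists_p hb₁ hb₂ hb₃ hc₁ hc₂ hc₃ hb hc hbb' hcc' hbc₁ hbc₂ hbc₃
  have key_ineq := fun t₁ t₂ t₃ s₁ s₂ s₃ =>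
    target_ineq hpos haa₁ haa₂ haa₃ hp₁ hp₂ hp₃ hA₁ hA₂ hA₃ hA₄ hA₅ hA₆ t₁ t₂ t₃ s₁ s₂ s₃
  intro X hX
  refine Matrix.PosSemidef.of_dotProduct_mulVec_nonneg ?_ ?_
  · -- Hermitian
    ext i j
    rw [Matrix.conjTranspose_apply]
    by_cases h : i = j
    · subst h
      simp only [PhiMap, Matrix.of_apply, if_pos rfl, eq_self_iff_true, if_true]
      rw [star_sum]
      refine Finset.sum_congr rfl fun k _ => ?_
      rw [psd_diag_real hX k, ← Complex.ofReal_mul]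
      exact Complex.conj_ofReal _
    · simp only [PhiMap, Matrix.of_apply, if_neg h, if_neg (Ne.symm h)]
      rw [star_neg]
      congr 1
      have := congrFun (congrFun hX.1 i) j
      rw [Matrix.conjTranspose_apply] at this
      exact this
  · intro η
    obtain ⟨x₀, hx₀, hx₀nn⟩ : ∃ r : ℝ, X 0 0 = (r : ℂ) ∧ 0 ≤ r :=
      ⟨(X 0 0).re, psd_diag_real hX 0, (Complex.nonneg_iff.mp (psd_diag_nonneg_s10 hX 0)).1⟩
    obtain ⟨x₁, hx₁, hx₁nn⟩ : ∃ r : ℝ, X 1 1 = (r : ℂ) ∧ 0 ≤ r :=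
      ⟨(X 1 1).re, psd_diag_real hX 1, (Complex.nonneg_iff.mp (psd_diag_nonneg_s10 hX 1)).1⟩
    obtain ⟨x₂, hx₂, hx₂nn⟩ : ∃ r : ℝ, X 2 2 = (r : ℂ) ∧ 0 ≤ r :=
      ⟨(X 2 2).re, psd_diag_real hX 2, (Complex.nonneg_iff.mp (psd_diag_nonneg_s10 hX 2)).1⟩
    set q₀ := ‖η 0‖ with hq₀def
    set q₁ := ‖η 1‖ with hq₁def
    set q₂ := ‖η 2‖ with hq₂def
    set t₀ := Real.sqrt x₀ with ht₀def
    set t₁ := Real.sqrt x₁ with ht₁def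
    set t₂ := Real.sqrt x₂ with ht₂def
    have hq₀ : (starRingEnd ℂ) (η 0) * η 0 = ((q₀ ^ 2 : ℝ) : ℂ) := by
      rw [hq₀def, Complex.sq_norm, Complex.normSq_eq_conj_mul_self]
    have hq₁ : (starRingEnd ℂ) (η 1) * η 1 = ((q₁ ^ 2 : ℝ) : ℂ) := by
      rw [hq₁def, Complex.sq_norm, Complex.normSq_eq_conj_mul_self]
    have hq₂ : (starRingEnd ℂ) (η 2) * η 2 = ((q₂ ^ 2 : ℝ) : ℂ) := by
      rw [hq₂def, Complex.sq_norm, Complex.normSq_eq_conj_mul_self]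
    set D : ℝ := (a₁ * x₀ + b₁ * x₁ + c₁ * x₂ + x₀) * q₀ ^ 2
      + (c₂ * x₀ + a₂ * x₁ + b₂ * x₂ + x₁) * q₁ ^ 2
      + (b₃ * x₀ + c₃ * x₁ + a₃ * x₂ + x₂) * q₂ ^ 2 with hDdef
    have key : star η ⬝ᵥ (PhiMap !![a₁, b₁, c₁; c₂, a₂, b₂; b₃, c₃, a₃] X *ᵥ η) =
        ((D : ℝ) : ℂ) - star η ⬝ᵥ (X *ᵥ η) := by
      simp only [PhiMap, dotProduct, Matrix.mulVec, Fin.sum_univ_three,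
        Matrix.of_apply, Matrix.cons_val_zero, Matrix.cons_val_one, Matrix.head_cons,
        Matrix.cons_val_two, Matrix.tail_cons, Matrix.cons_val', Matrix.empty_val',
        Matrix.cons_val_fin_one, Matrix.head_fin_const, Pi.star_apply, RCLike.star_def,
        hDdef]
      norm_num
      rw [hx₀, hx₁, hx₂]
      push_cast
      linear_combination (norm := (push_cast; ring1)) ((a₁ * x₀ + b₁ * x₁ + c₁ * x₂ + x₀ : ℝ) : ℂ) * hq₀
        + ((c₂ * x₀ + a₂ * x₁ + b₂ * x₂ + x₁ : ℝ) : ℂ) * hq₁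
        + ((b₃ * x₀ + c₃ * x₁ + a₃ * x₂ + x₂ : ℝ) : ℂ) * hq₂
    rw [key]
    have hQ := hX.dotProduct_mulVec_nonneg η
    have hQre : star η ⬝ᵥ (X *ᵥ η) = (((star η ⬝ᵥ (X *ᵥ η)).re : ℝ) : ℂ) :=
      Complex.eq_re_of_ofReal_le (by exact_mod_cast hQ)
    rw [hQre, ← Complex.ofReal_sub, Complex.zero_le_real, sub_nonneg]
    -- bound the quadratic form of X
    have hQexp : star η ⬝ᵥ (X *ᵥ η) =
        ∑ i, ∑ j, (starRingEnd ℂ) (η i) * (X i j * η j) := by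
      simp only [dotProduct, Matrix.mulVec, Pi.star_apply, RCLike.star_def,
        Finset.mul_sum]
    have hT : ∀ i j, ‖(starRingEnd ℂ) (η i) * (X i j * η j)‖ ≤
        (Real.sqrt (X i i).re * ‖η i‖) *
        (Real.sqrt (X j j).re * ‖η j‖) := by
      intro i j
      rw [norm_mul, norm_mul, Complex.norm_conj]
      calc ‖η i‖ * (‖X i j‖ * ‖η j‖)
          = ‖X i j‖ * (‖η i‖ * ‖η j‖) := by ring
        _ ≤ (Real.sqrt (X i i).re * Real.sqrt (X j j).re) *
            (‖η i‖ * ‖η j‖) :=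
          mul_le_mul_of_nonneg_right (psd_entry_bound hX i j)
            (mul_nonneg (norm_nonneg _) (norm_nonneg _))
        _ = (Real.sqrt (X i i).re * ‖η i‖) *
            (Real.sqrt (X j j).re * ‖η j‖) := by ring
    have hre0 : (X 0 0).re = x₀ := by rw [hx₀]; simp
    have hre1 : (X 1 1).re = x₁ := by rw [hx₁]; simp
    have hre2 : (X 2 2).re = x₂ := by rw [hx₂]; simp
    have habsQ : (star η ⬝ᵥ (X *ᵥ η)).re ≤ (t₀ * q₀ + t₁ * q₁ + t₂ * q₂) ^ 2 := by
      refine le_trans (Complex.re_le_norm _) ?_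
      rw [hQexp]
      refine le_trans (norm_sum_le _ _) ?_
      refine le_trans (Finset.sum_le_sum fun i _ => norm_sum_le _ _) ?_
      have expand : ∑ i : Fin 3, ∑ j : Fin 3,
          ‖(starRingEnd ℂ) (η i) * (X i j * η j)‖ ≤
          ∑ i : Fin 3, ∑ j : Fin 3, (Real.sqrt (X i i).re * ‖η i‖) *
            (Real.sqrt (X j j).re * ‖η j‖) :=
        Finset.sum_le_sum fun i _ => Finset.sum_le_sum fun j _ => hT i j
      refine le_trans expand (le_of_eq ?_)
      simp only [Fin.sum_univ_three, hre0, hre1, hre2, ← ht₀def, ← ht₁def, ← ht₂def,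
        ← hq₀def, ← hq₁def, ← hq₂def]
      ring
    refine le_trans habsQ ?_
    have := key_ineq t₀ t₁ t₂ q₀ q₁ q₂
    have e₀ : t₀ ^ 2 = x₀ := Real.sq_sqrt hx₀nn
    have e₁ : t₁ ^ 2 = x₁ := Real.sq_sqrt hx₁nn
    have e₂ : t₂ ^ 2 = x₂ := Real.sq_sqrt hx₂nn
    rw [e₀, e₁, e₂] at this
    rw [hDdef]
    refine le_trans this (le_of_eq ?_)
    ring
end
end

section
/- Let A = (a_{ij}) be an n×n real matrix with nonnegative entries and let Φ_A(X) = Δ_A(X) − X. If the map Φ_A is positive, then √(a_{ii}a_{jj}) + √(a_{ij}a_{ji}) ≥ 1 for all i ≠ j. -/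
set_option maxHeartbeats 1000000 in
private lemma aux_local (α β γ δ : ℝ) (hα : 0 ≤ α) (hβ : 0 ≤ β) (hγ : 0 ≤ γ) (hδ : 0 ≤ δ)
    (hstar : ∀ s t c d : ℝ,
      0 ≤ (α*s^2 + γ*t^2)*c^2 + (δ*s^2 + β*t^2)*d^2 - 2*s*t*c*d) :
    1 ≤ Real.sqrt (α*β) + Real.sqrt (γ*δ) := by
  set p := Real.sqrt (α*β) with hpdef
  set q := Real.sqrt (γ*δ) with hqdef
  have hp : 0 ≤ p := Real.sqrt_nonneg _
  have hq0 : 0 ≤ q := Real.sqrt_nonneg _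
  have hp2 : p^2 = α*β := Real.sq_sqrt (mul_nonneg hα hβ)
  have hq2 : q^2 = γ*δ := Real.sq_sqrt (mul_nonneg hγ hδ)
  -- Key inequality K
  have K : ∀ u v : ℝ, 0 ≤ u → 0 ≤ v → u * v ≤ (α*u + γ*v) * (δ*u + β*v) := by
    intro u v hu hv
    have hP : 0 ≤ α*u + γ*v := by positivity
    have hQ : 0 ≤ δ*u + β*v := by positivity
    have hsu : (Real.sqrt u)^2 = u := Real.sq_sqrt hu
    have hsv : (Real.sqrt v)^2 = v := Real.sq_sqrt hv
    have hsuv : Real.sqrt u * Real.sqrt v = Real.sqrt (u*v) := (Real.sqrt_mul hu v).symm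
    have hsuv2 : (Real.sqrt (u*v))^2 = u*v := Real.sq_sqrt (mul_nonneg hu hv)
    rcases eq_or_lt_of_le hP with hP0 | hP0
    · -- α*u + γ*v = 0
      rcases eq_or_lt_of_le (mul_nonneg hu hv) with huv | huv
      · nlinarith
      · exfalso
        have hu' : 0 < u := by nlinarith
        have hv' : 0 < v := by nlinarith
        have hα0 : α = 0 := by nlinarith [mul_nonneg hα hu, mul_nonneg hγ hv]
        have hγ0 : γ = 0 := by nlinarith [mul_nonneg hα hu, mul_nonneg hγ hv]
        have h1 := hstar 1 1 ((δ+β+1)/2) 1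
        rw [hα0, hγ0] at h1
        norm_num at h1
        nlinarith [h1]
    · have h1 := hstar (Real.sqrt u) (Real.sqrt v) (Real.sqrt (u*v)) (α*u + γ*v)
      rw [hsu, hsv, mul_assoc 2, hsuv] at h1
      have h3 : (α*u + γ*v) * (u*v) ≤ (α*u + γ*v) * ((α*u + γ*v) * (δ*u + β*v)) := by
        nlinarith [h1, hsuv2]
      have := le_of_mul_le_mul_left h3 hP0
      linarith [this]
  by_contra hcon
  push_neg at hcon
  rcases eq_or_lt_of_le (mul_nonneg hp hq0) with hpq | hpq
  · -- p*q = 0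
    have h0 : (α*δ)*(γ*β) = 0 := by nlinarith [hp2, hq2]
    have hsum1 : p^2 + q^2 < 1 := by nlinarith
    have hd' : 0 < 1 - (p^2 + q^2) := by linarith
    rcases mul_eq_zero.mp h0 with h1 | h1
    · have httn : 0 ≤ (γ*β+1)/(1-(p^2+q^2)) := by positivity
      have hK := K ((γ*β+1)/(1-(p^2+q^2))) 1 httn zero_le_one
      have he : (1-(p^2+q^2)) * ((γ*β+1)/(1-(p^2+q^2))) = γ*β+1 := by field_simp
      set tt := (γ*β+1)/(1-(p^2+q^2)) with htt
      have hexp : (α*tt + γ*1)*(δ*tt + β*1)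
          = α*δ*tt^2 + (α*β)*tt + (γ*δ)*tt + γ*β := by ring
      rw [hexp, h1, zero_mul, ← hp2, ← hq2] at hK
      nlinarith [hK, he]
    · have httn : 0 ≤ (α*δ+1)/(1-(p^2+q^2)) := by positivity
      have hK := K 1 ((α*δ+1)/(1-(p^2+q^2))) zero_le_one httn
      have he : (1-(p^2+q^2)) * ((α*δ+1)/(1-(p^2+q^2))) = α*δ+1 := by field_simp
      set tt := (α*δ+1)/(1-(p^2+q^2)) with htt
      have hexp : (α*1 + γ*tt)*(δ*1 + β*tt)
          = γ*β*tt^2 + (α*β)*tt + (γ*δ)*tt + α*δ := by ring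
      rw [hexp, h1, zero_mul, ← hp2, ← hq2] at hK
      nlinarith [hK, he]
  · -- p*q > 0
    set r := Real.sqrt (γ*β) with hr
    set w := Real.sqrt (α*δ) with hw
    have e2 : r^2 = γ*β := Real.sq_sqrt (mul_nonneg hγ hβ)
    have e3 : w^2 = α*δ := Real.sq_sqrt (mul_nonneg hα hδ)
    have e1 : r * w = p*q := by
      rw [hr, hw, ← Real.sqrt_mul (mul_nonneg hγ hβ)]
      have h4 : (γ*β)*(α*δ) = (p*q)^2 := by rw [mul_pow, hp2, hq2]; ring
      rw [h4, Real.sqrt_sq (le_of_lt hpq)]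
    have h2 := K r w (Real.sqrt_nonneg _) (Real.sqrt_nonneg _)
    have hexp : (α*r + γ*w)*(δ*r + β*w)
        = α*δ*r^2 + (α*β)*(r*w) + (γ*δ)*(r*w) + γ*β*w^2 := by ring
    rw [hexp, e1, e2, e3, ← hp2, ← hq2] at h2
    have h4 : α*δ*(γ*β) = (p*q)^2 := by rw [mul_pow, hp2, hq2]; ring
    have h4' : γ*β*(α*δ) = (p*q)^2 := by rw [mul_pow, hp2, hq2]; ring
    have h5 : 0 < 1 - (p+q)^2 := by nlinarith [hcon, hp, hq0]
    nlinarith [h2, h4, h4', mul_pos hpq h5]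



open Matrix
open scoped ComplexOrder

noncomputable section

/-- If `Φ_A(X) = Δ_A(X) - X` is positive, then
`√(a_{ii}a_{jj}) + √(a_{ij}a_{ji}) ≥ 1` for all `i ≠ j`. -/
theorem phiDelta_pos_implies_local (n : ℕ) (A : Matrix (Fin n) (Fin n) ℝ)
    (hA : ∀ i j, 0 ≤ A i j) (hpos : IsPosMap (PhiDelta A)) :
    ∀ i j, i ≠ j → 1 ≤ Real.sqrt (A i i * A j j) + Real.sqrt (A i j * A j i) := by
  
  intro i j hij
  apply aux_local (A i i) (A j j) (A i j) (A j i) (hA i i) (hA j j) (hA i j) (hA j i)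
  intro s t c d
  set x : Fin n → ℂ := fun k => if k = i then (s:ℂ) else if k = j then (t:ℂ) else 0 with hxdef
  set C : Matrix (Fin n) (Fin 1) ℂ := Matrix.of (fun k _ => x k) with hCdef
  have hX : (C * Cᴴ).PosSemidef := Matrix.posSemidef_self_mul_conjTranspose C
  set X := C * Cᴴ with hXdef
  have hXe : ∀ k l, X k l = x k * (starRingEnd ℂ) (x l) := by
    intro k l
    simp [hXdef, hCdef, Matrix.mul_apply, Matrix.conjTranspose_apply, Fin.sum_univ_one]
  have hM := hpos X hX
  have hB := hM.submatrix ![i, j]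
  have hq := hB.dotProduct_mulVec_nonneg ![(c:ℂ), (d:ℂ)]
  have hxi : x i = (s:ℂ) := by simp [hxdef]
  have hxj : x j = (t:ℂ) := by
    simp [hxdef, Ne.symm hij]
  have hXd : ∀ m, X m m = (if m = i then ((s:ℂ))^2 else if m = j then ((t:ℂ))^2 else 0) := by
    intro m
    rw [hXe]
    by_cases h1 : m = i
    · subst h1; rw [hxi]; simp [Complex.conj_ofReal]; ring
    · by_cases h2 : m = j
      · subst h2; rw [hxj]; simp [h1, Complex.conj_ofReal]; ring
      · simp [hxdef, h1, h2]
  have hsum : ∀ g : Fin n → ℂ, ∑ m, g m * X m m = g i * (s:ℂ)^2 + g j * (t:ℂ)^2 := by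
    intro g
    have hsplit : ∀ m : Fin n, g m * X m m
        = (if m = i then g i * (s:ℂ)^2 else 0) + (if m = j then g j * (t:ℂ)^2 else 0) := by
      intro m
      rw [hXd m]
      by_cases h1 : m = i
      · subst h1; simp [hij]
      · by_cases h2 : m = j
        · subst h2; simp [h1]
        · simp [h1, h2]
    rw [Finset.sum_congr rfl (fun m _ => hsplit m), Finset.sum_add_distrib,
        Finset.sum_ite_eq' Finset.univ i, Finset.sum_ite_eq' Finset.univ j]
    simp
  have hDii : PhiDelta A X i i = ((A i i * s^2 + A i j * t^2 : ℝ) : ℂ) := by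
    simp only [PhiDelta, DeltaMap, Matrix.sub_apply, Matrix.diagonal_apply_eq]
    rw [hsum (fun m => ((A i m : ℂ) + if i = m then 1 else 0)), hXd i]
    simp [hij] <;> (push_cast; ring)
  have hDjj : PhiDelta A X j j = ((A j i * s^2 + A j j * t^2 : ℝ) : ℂ) := by
    simp only [PhiDelta, DeltaMap, Matrix.sub_apply, Matrix.diagonal_apply_eq]
    rw [hsum (fun m => ((A j m : ℂ) + if j = m then 1 else 0)), hXd j]
    simp [hij, Ne.symm hij] <;> (push_cast; ring)
  have hDij : PhiDelta A X i j = -((s*t : ℝ) : ℂ) := by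
    simp only [PhiDelta, DeltaMap, Matrix.sub_apply]
    rw [Matrix.diagonal_apply_ne _ hij, hXe i j, hxi, hxj]
    simp [Complex.conj_ofReal] <;> (push_cast; ring)
  have hDji : PhiDelta A X j i = -((s*t : ℝ) : ℂ) := by
    simp only [PhiDelta, DeltaMap, Matrix.sub_apply]
    rw [Matrix.diagonal_apply_ne _ (Ne.symm hij), hXe j i, hxi, hxj]
    simp [Complex.conj_ofReal] <;> (push_cast; ring)
  have hcalc : star (![(c:ℂ), (d:ℂ)]) ⬝ᵥ ((PhiDelta A X).submatrix ![i,j] ![i,j]) *ᵥ ![(c:ℂ),(d:ℂ)]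
      = (((A i i * s^2 + A i j * t^2)*c^2 + (A j i * s^2 + A j j * t^2)*d^2
          - 2*s*t*c*d : ℝ) : ℂ) := by
    simp [dotProduct, Matrix.mulVec, Fin.sum_univ_two, Matrix.submatrix_apply,
      hDii, hDjj, hDij, hDji, Complex.conj_ofReal]
    push_cast
    ring
  rw [hcalc] at hq
  exact Complex.zero_le_real.mp hq
end
end
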